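/- arXiv:2601.12997 — 7 statements merged into one kernel-verified Lean document; each statement's English description precedes it below -/
import Mathlib

section
/- Let X₁,…,X_M and Y₁,…,Y_N be independent random variables with X_i ~ N(0, σ_{X_i}²) and Y_j ~ N(0, σ_{Y_j}²), and set Z = (X₁⋯X_M)/(Y₁⋯Y_N), σ_M = σ_{X_1}⋯σ_{X_M}, s_N = σ_{Y_1}⋯σ_{Y_N}. Then for every r with -1 < r < 1, E[|Z|^r] = (2^{(M-N)r/2} σ_M^r / (π^{(M+N)/2} s_N^r)) · (Γ((r+1)/2))^M · (Γ((1-r)/2))^N. -/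
open MeasureTheory ProbabilityTheory Real Set
open scoped ENNReal NNReal


lemma gauss_abs_moment {σ r : ℝ} (hσ : 0 < σ) (hr : -1 < r) :
    ∫ x, |x| ^ r ∂(gaussianReal 0 (Real.toNNReal (σ ^ 2))) =
      σ ^ r * 2 ^ (r / 2) * Real.Gamma ((r + 1) / 2) / Real.sqrt π := by
  have hv : (Real.toNNReal (σ ^ 2)) ≠ 0 := by
    simp [Real.toNNReal_eq_zero, not_le]; positivity
  have hvr : ((Real.toNNReal (σ ^ 2)) : ℝ) = σ ^ 2 := Real.coe_toNNReal _ (by positivity)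
  rw [gaussianReal_of_var_ne_zero _ hv, gaussianPDF_def]
  rw [show (fun x => ENNReal.ofReal (gaussianPDFReal 0 (Real.toNNReal (σ ^ 2)) x))
      = (fun x => ((fun y => (gaussianPDFReal 0 (Real.toNNReal (σ ^ 2)) y).toNNReal) x : ℝ≥0∞))
    from rfl]
  rw [integral_withDensity_eq_integral_smul
    ((measurable_gaussianPDFReal 0 _).real_toNNReal) (fun x => |x| ^ r)]
  have h1 : ∀ x : ℝ, (gaussianPDFReal 0 (Real.toNNReal (σ ^ 2)) x).toNNReal • |x| ^ r
      = (Real.sqrt (2 * π * σ ^ 2))⁻¹ * (|x| ^ r * Real.exp (-((2 * σ ^ 2)⁻¹ * x ^ 2))) := by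
    intro x
    rw [NNReal.smul_def, smul_eq_mul, Real.coe_toNNReal _ (gaussianPDFReal_nonneg _ _ _),
      gaussianPDFReal, hvr]
    ring_nf
  simp_rw [h1]
  rw [integral_const_mul]
  have h2 : (∫ x : ℝ, |x| ^ r * Real.exp (-((2 * σ ^ 2)⁻¹ * x ^ 2)))
      = 2 * ∫ x in Ioi (0:ℝ), x ^ r * Real.exp (-((2 * σ ^ 2)⁻¹ * x ^ 2)) := by
    rw [← integral_comp_abs (f := fun t => t ^ r * Real.exp (-((2 * σ ^ 2)⁻¹ * t ^ 2)))]
    congr 1 with x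
    rw [sq_abs]
  rw [h2]
  have h3 : (∫ x in Ioi (0:ℝ), x ^ r * Real.exp (-((2 * σ ^ 2)⁻¹ * x ^ 2)))
      = ((2 * σ ^ 2)⁻¹) ^ (-(r + 1) / 2) * (1 / 2) * Real.Gamma ((r + 1) / 2) := by
    rw [← integral_rpow_mul_exp_neg_mul_rpow two_pos hr (by positivity)]
    refine setIntegral_congr_fun measurableSet_Ioi fun x hx => ?_
    have hx2 : x ^ (2:ℝ) = x ^ (2:ℕ) := by
      rw [← Real.rpow_natCast x 2]; norm_num
    rw [hx2]; ring_nf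
  rw [h3]
  have e1 : ((2 * σ ^ 2)⁻¹ : ℝ) ^ (-(r + 1) / 2) = 2 ^ ((r + 1) / 2) * σ ^ (r + 1) := by
    rw [Real.inv_rpow (by positivity), ← Real.rpow_neg (by positivity), neg_div, neg_neg,
      Real.mul_rpow (by norm_num) (by positivity)]
    congr 1
    rw [← Real.rpow_natCast σ 2, ← Real.rpow_mul hσ.le]
    norm_num
    ring_nf
  have e2 : Real.sqrt (2 * π * σ ^ 2) = Real.sqrt 2 * Real.sqrt π * σ := by
    rw [Real.sqrt_mul (by positivity), Real.sqrt_mul (by norm_num), Real.sqrt_sq hσ.le]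
  have e3 : (2:ℝ) ^ ((r + 1) / 2) = 2 ^ (r / 2) * Real.sqrt 2 := by
    rw [Real.sqrt_eq_rpow, ← Real.rpow_add two_pos]
    ring_nf
  have e4 : σ ^ (r + 1) = σ ^ r * σ := Real.rpow_add_one hσ.ne' r
  rw [e1, e2, e3, e4]
  have hs2 : Real.sqrt 2 ≠ 0 := by positivity
  have hsp : Real.sqrt π ≠ 0 := by positivity
  field_simp

lemma integral_prod_of_indep {Ω : Type*} [MeasureSpace Ω] [IsProbabilityMeasure (ℙ : Measure Ω)]
    {ι : Type*} (g : ι → Ω → ℝ) (hg : ∀ i, Measurable (g i)) (hgnn : ∀ i ω, 0 ≤ g i ω)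
    (hindep : iIndepFun g ℙ) (s : Finset ι) :
    ∫ ω, ∏ i ∈ s, g i ω ∂ℙ = ∏ i ∈ s, ∫ ω, g i ω ∂ℙ := by
  classical
  induction s using Finset.induction_on with
  | empty => simp
  | @insert a s ha ih =>
    have hInd : IndepFun (g a) (∏ i ∈ s, g i) ℙ :=
      (hindep.indepFun_finsetProd_of_notMem hg ha).symm
    have hmul := hInd.integral_mul_eq_mul_integral
      (hg a).aestronglyMeasurable (by simpa [Finset.prod_fn] using (Finset.measurable_prod s fun i _ => hg i).aestronglyMeasurable)
    have hfun : (g a * ∏ i ∈ s, g i) = fun ω => g a ω * ∏ i ∈ s, g i ω := by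
      ext ω; simp [Finset.prod_apply]
    have hfun2 : (∏ i ∈ s, g i) = fun ω => ∏ i ∈ s, g i ω := by
      ext ω; simp [Finset.prod_apply]
    rw [hfun, hfun2] at hmul
    simp only [Finset.prod_insert ha]
    rw [hmul, ih]

lemma measurable_abs_rpow (c : ℝ) : Measurable (fun t : ℝ => |t| ^ c) := by
  have h : (fun t : ℝ => |t| ^ c)
      = fun t => if t = 0 then (0:ℝ) ^ c else Real.exp (Real.log |t| * c) := by
    ext t
    by_cases ht : t = 0
    · simp [ht]
    · rw [if_neg ht, Real.rpow_def_of_pos (abs_pos.mpr ht)]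
  rw [h]
  exact Measurable.ite (measurableSet_eq_fun measurable_id measurable_const)
    measurable_const ((Real.measurable_log.comp measurable_abs).mul measurable_const).exp

/-- Fractional absolute moments of the ratio of products of independent zero-mean
normal random variables. -/
theorem frac_moment_normal_product_ratio
    {Ω : Type*} [MeasureSpace Ω] [IsProbabilityMeasure (ℙ : Measure Ω)]
    (M N : ℕ) (σX : Fin M → ℝ) (σY : Fin N → ℝ)
    (hσX : ∀ i, 0 < σX i) (hσY : ∀ j, 0 < σY j)
    (X : Fin M → Ω → ℝ) (Y : Fin N → Ω → ℝ)
    (hX : ∀ i, Measurable (X i)) (hY : ∀ j, Measurable (Y j))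
    (hXlaw : ∀ i, Measure.map (X i) ℙ = gaussianReal 0 (Real.toNNReal ((σX i) ^ 2)))
    (hYlaw : ∀ j, Measure.map (Y j) ℙ = gaussianReal 0 (Real.toNNReal ((σY j) ^ 2)))
    (hindep : iIndepFun (Sum.elim X Y) ℙ)
    (r : ℝ) (hr₁ : -1 < r) (hr₂ : r < 1) :
    ∫ ω, |(∏ i, X i ω) / (∏ j, Y j ω)| ^ r ∂ℙ =
      2 ^ ((M - N : ℝ) * r / 2) * (∏ i, σX i) ^ r /
        (Real.pi ^ ((M + N : ℝ) / 2) * (∏ j, σY j) ^ r) *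
      (Real.Gamma ((r + 1) / 2)) ^ M * (Real.Gamma ((1 - r) / 2)) ^ N := by
  -- the exponent function and factor functions
  set e : Fin M ⊕ Fin N → ℝ := Sum.elim (fun _ => r) (fun _ => -r) with he
  set g : Fin M ⊕ Fin N → Ω → ℝ :=
    fun idx => (fun t : ℝ => |t| ^ (e idx)) ∘ (Sum.elim X Y idx) with hg
  have hgmeas : ∀ idx, Measurable (g idx) := by
    rintro (i | j)
    · exact (measurable_abs_rpow _).comp (hX i)
    · exact (measurable_abs_rpow _).comp (hY j)
  have hgnn : ∀ idx ω, 0 ≤ g idx ω := by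
    rintro (i | j) ω
    · exact Real.rpow_nonneg (abs_nonneg _) _
    · exact Real.rpow_nonneg (abs_nonneg _) _
  have hgindep : iIndepFun g ℙ := by
    refine hindep.comp (fun idx => fun t : ℝ => |t| ^ (e idx)) ?_
    rintro (i | j) <;> exact measurable_abs_rpow _
  -- pointwise identity
  have hpt : ∀ ω, |(∏ i, X i ω) / (∏ j, Y j ω)| ^ r = ∏ idx, g idx ω := by
    intro ω
    rw [Fintype.prod_sum_type]
    have h1 : (∏ i, g (Sum.inl i) ω) = ∏ i, |X i ω| ^ r := rfl
    have h2 : (∏ j, g (Sum.inr j) ω) = ∏ j, |Y j ω| ^ (-r) := rfl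
    rw [h1, h2, abs_div, Real.div_rpow (abs_nonneg _) (abs_nonneg _),
      Finset.abs_prod, Finset.abs_prod,
      ← Real.finset_prod_rpow _ _ (fun i _ => abs_nonneg _) r,
      ← Real.finset_prod_rpow _ _ (fun j _ => abs_nonneg _) r,
      div_eq_mul_inv, ← Finset.prod_inv_distrib]
    congr 1
    refine Finset.prod_congr rfl fun j _ => ?_
    rw [← Real.rpow_neg (abs_nonneg _)]
  simp_rw [hpt]
  rw [integral_prod_of_indep g hgmeas hgnn hgindep Finset.univ, Fintype.prod_sum_type]
  -- evaluate each one-dimensional integral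
  have hXint : ∀ i, ∫ ω, g (Sum.inl i) ω ∂ℙ
      = σX i ^ r * 2 ^ (r / 2) * Real.Gamma ((r + 1) / 2) / Real.sqrt π := by
    intro i
    have : ∫ ω, g (Sum.inl i) ω ∂ℙ = ∫ x, |x| ^ r ∂(Measure.map (X i) ℙ) := by
      rw [integral_map (hX i).aemeasurable
        (measurable_abs_rpow _).aestronglyMeasurable]
      rfl
    rw [this, hXlaw i, gauss_abs_moment (hσX i) hr₁]
  have hYint : ∀ j, ∫ ω, g (Sum.inr j) ω ∂ℙ
      = σY j ^ (-r) * 2 ^ (-(r / 2)) * Real.Gamma ((1 - r) / 2) / Real.sqrt π := by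
    intro j
    have : ∫ ω, g (Sum.inr j) ω ∂ℙ = ∫ x, |x| ^ (-r) ∂(Measure.map (Y j) ℙ) := by
      rw [integral_map (hY j).aemeasurable
        (measurable_abs_rpow _).aestronglyMeasurable]
      rfl
    rw [this, hYlaw j, gauss_abs_moment (hσY j) (by linarith)]
    rw [show (-r + 1) / 2 = (1 - r) / 2 by ring, show -r / 2 = -(r / 2) by ring]
  simp_rw [hXint, hYint]
  -- pull out constants from the products
  set G1 := Real.Gamma ((r + 1) / 2)
  set G2 := Real.Gamma ((1 - r) / 2)
  have hXprod : (∏ i, σX i ^ r * 2 ^ (r / 2) * G1 / Real.sqrt π)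
      = (∏ i, σX i) ^ r * (2 ^ (r / 2) * G1 / Real.sqrt π) ^ M := by
    have : ∀ i : Fin M, σX i ^ r * 2 ^ (r / 2) * G1 / Real.sqrt π
        = σX i ^ r * (2 ^ (r / 2) * G1 / Real.sqrt π) := fun i => by ring
    simp_rw [this]
    rw [Finset.prod_mul_distrib, Finset.prod_const, Finset.card_univ, Fintype.card_fin,
      Real.finset_prod_rpow _ _ (fun i _ => (hσX i).le) r]
  have hYprod : (∏ j, σY j ^ (-r) * 2 ^ (-(r / 2)) * G2 / Real.sqrt π)
      = (∏ j, σY j) ^ (-r) * (2 ^ (-(r / 2)) * G2 / Real.sqrt π) ^ N := by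
    have : ∀ j : Fin N, σY j ^ (-r) * 2 ^ (-(r / 2)) * G2 / Real.sqrt π
        = σY j ^ (-r) * (2 ^ (-(r / 2)) * G2 / Real.sqrt π) := fun j => by ring
    simp_rw [this]
    rw [Finset.prod_mul_distrib, Finset.prod_const, Finset.card_univ, Fintype.card_fin,
      Real.finset_prod_rpow _ _ (fun j _ => (hσY j).le) (-r)]
  rw [hXprod, hYprod]
  -- final algebra
  have hPX : (0:ℝ) < ∏ i, σX i := Finset.prod_pos fun i _ => hσX i
  have hPY : (0:ℝ) < ∏ j, σY j := Finset.prod_pos fun j _ => hσY j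
  have hsqpi : Real.sqrt π = π ^ (1 / 2 : ℝ) := Real.sqrt_eq_rpow π
  have epow : ∀ (a b : ℝ) (n : ℕ), 0 < a → (a ^ b) ^ n = a ^ (b * n) := by
    intro a b n ha
    rw [← Real.rpow_natCast (a ^ b) n, ← Real.rpow_mul ha.le]
  rw [div_pow, div_pow, mul_pow, mul_pow, hsqpi,
    epow 2 (r/2) M two_pos, epow 2 (-(r/2)) N two_pos,
    epow π (1/2) M Real.pi_pos, epow π (1/2) N Real.pi_pos,
    Real.rpow_neg hPY.le,
    show ((M:ℝ) - N) * r / 2 = r / 2 * M + -(r / 2) * N by ring,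
    show ((M:ℝ) + N) / 2 = 1 / 2 * M + 1 / 2 * N by ring,
    Real.rpow_add two_pos, Real.rpow_add Real.pi_pos]
  have h1 : (0:ℝ) < 2 ^ (r / 2 * M) := Real.rpow_pos_of_pos two_pos _
  have h2 : (0:ℝ) < 2 ^ (-(r / 2) * N) := Real.rpow_pos_of_pos two_pos _
  have h3 : (0:ℝ) < π ^ (1 / 2 * (M:ℝ)) := Real.rpow_pos_of_pos Real.pi_pos _
  have h4 : (0:ℝ) < π ^ (1 / 2 * (N:ℝ)) := Real.rpow_pos_of_pos Real.pi_pos _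
  have h5 : (0:ℝ) < (∏ j, σY j) ^ r := Real.rpow_pos_of_pos hPY _
  field_simp
end

section
/- Let X₁, X₂ be independent N(0, σ₁²) and N(0, σ₂²) random variables and set σ = σ₁σ₂. Then the product X₁X₂ has probability density function f(x) = (1/(π σ)) K₀(|x|/σ) for x ≠ 0, where K₀ is the modified Bessel function of the second kind of order 0. -/
open MeasureTheory ProbabilityTheory Real Set
open scoped ENNReal NNReal

/-- The modified Bessel function of the second kind of order 0,
`K₀(x) = ∫_0^∞ exp(-x cosh t) dt`. -/
noncomputable def besselK0 (x : ℝ) : ℝ :=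
  ∫ t in Set.Ioi (0 : ℝ), Real.exp (-(x * Real.cosh t))

lemma lintegral_image_eq_lintegral_abs_deriv_mul' {s : Set ℝ} {f f' : ℝ → ℝ}
    (hs : MeasurableSet s) (hf' : ∀ x ∈ s, HasDerivWithinAt f (f' x) s x)
    (hf : Set.InjOn f s) (g : ℝ → ℝ≥0∞) :
    ∫⁻ x in f '' s, g x = ∫⁻ x in s, ENNReal.ofReal |f' x| * g (f x) := by
  simpa only [ContinuousLinearMap.det_toSpanSingleton] using
    MeasureTheory.lintegral_image_eq_lintegral_abs_det_fderiv_mul volume hs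
      (fun x hx => (hf' x hx).hasFDerivWithinAt) hf g

lemma lintegral_even' (g : ℝ → ℝ≥0∞) (hg : ∀ x, g (-x) = g x) :
    ∫⁻ x, g x = 2 * ∫⁻ x in Ioi (0:ℝ), g x := by
  have h1 : ∫⁻ x, g x = (∫⁻ x in Ioi (0:ℝ), g x) + ∫⁻ x in Iic (0:ℝ), g x := by
    rw [← lintegral_add_compl g (measurableSet_Ioi (a := (0:ℝ)))]
    simp [compl_Ioi]
  have h2 : ∫⁻ x in Iic (0:ℝ), g x = ∫⁻ x in Iio (0:ℝ), g x :=
    (setLIntegral_congr (Iio_ae_eq_Iic (a := (0:ℝ)))).symm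
  have h3 : Iio (0:ℝ) = (fun x : ℝ => -x) '' Ioi 0 := by
    ext x
    constructor
    · intro hx; exact ⟨-x, by simp at hx ⊢; linarith, by ring⟩
    · rintro ⟨y, hy, rfl⟩; simp at hy ⊢; linarith
  have h4 : ∫⁻ x in Iio (0:ℝ), g x = ∫⁻ x in Ioi (0:ℝ), g x := by
    rw [h3, lintegral_image_eq_lintegral_abs_deriv_mul' measurableSet_Ioi
      (f' := fun _ => (-1 : ℝ)) (fun x _ => (hasDerivAt_neg x).hasDerivWithinAt)
      (fun x _ y _ h => by simpa using h) g]
    simp [hg]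
  rw [h1, h2, h4, two_mul]


lemma besselK0_nonneg (z : ℝ) : 0 ≤ besselK0 z :=
  setIntegral_nonneg measurableSet_Ioi (fun t _ => (Real.exp_pos _).le)

lemma integrableOn_exp_neg_mul_cosh {z : ℝ} (hz : 0 < z) :
    IntegrableOn (fun t => Real.exp (-(z * Real.cosh t))) (Ioi (0:ℝ)) := by
  have hbound : IntegrableOn (fun t => Real.exp (-(z/2)) * Real.exp (-(z/2) * t)) (Ioi (0:ℝ)) :=
    (exp_neg_integrableOn_Ioi 0 (by linarith)).const_mul _
  refine hbound.mono' ?_ ?_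
  · exact (Continuous.aestronglyMeasurable (by continuity)).restrict
  · filter_upwards [ae_restrict_mem measurableSet_Ioi] with t ht
    rw [Real.norm_eq_abs, abs_of_pos (Real.exp_pos _), ← Real.exp_add]
    apply Real.exp_le_exp.2
    have h1 : (1 + t) / 2 ≤ Real.cosh t := by
      have h2 : Real.exp t / 2 ≤ Real.cosh t := by
        rw [Real.cosh_eq]
        have := (Real.exp_pos (-t)).le
        linarith
      have := Real.add_one_le_exp t
      linarith
    have hle : z * ((1+t)/2) ≤ z * Real.cosh t := by
      exact mul_le_mul_of_nonneg_left h1 hz.le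
    nlinarith

lemma lintegral_ofReal_exp_neg_mul_cosh {z : ℝ} (hz : 0 < z) :
    ∫⁻ t in Ioi (0:ℝ), ENNReal.ofReal (Real.exp (-(z * Real.cosh t))) =
      ENNReal.ofReal (besselK0 z) := by
  rw [besselK0, ofReal_integral_eq_lintegral_ofReal (integrableOn_exp_neg_mul_cosh hz)
    (ae_of_all _ (fun t => (Real.exp_pos _).le))]

lemma measurable_besselK0 : Measurable besselK0 := by
  have h : StronglyMeasurable (Function.uncurry fun (z t : ℝ) => Real.exp (-(z * Real.cosh t))) := by
    apply Continuous.stronglyMeasurable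
    exact Real.continuous_exp.comp
      ((continuous_fst.mul (Real.continuous_cosh.comp continuous_snd)).neg)
  exact (StronglyMeasurable.integral_prod_right' (ν := volume.restrict (Ioi 0)) h).measurable

lemma prod_pdf_eq (σ₁ σ₂ : ℝ) (hσ₁ : 0 < σ₁) (hσ₂ : 0 < σ₂) (u : ℝ) :
    ∀ x : ℝ, gaussianPDFReal 0 (Real.toNNReal (σ₁^2)) x *
        gaussianPDFReal 0 (Real.toNNReal (x^2) * Real.toNNReal (σ₂^2)) u =
      (2*π*(σ₁*σ₂))⁻¹ * (|x|⁻¹ * Real.exp (-(x^2/(2*σ₁^2) + u^2/(2*(σ₂^2*x^2))))) := by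
  intro x
  have hπ : (0:ℝ) < 2*π := by positivity
  have hcoe1 : ((Real.toNNReal (σ₁^2) : ℝ≥0) : ℝ) = σ₁^2 := Real.coe_toNNReal _ (sq_nonneg _)
  have hcoe2 : ((Real.toNNReal (x^2) * Real.toNNReal (σ₂^2) : ℝ≥0) : ℝ) = x^2 * σ₂^2 := by
    push_cast [Real.coe_toNNReal _ (sq_nonneg σ₂), Real.coe_toNNReal _ (sq_nonneg x)]
    ring
  rcases eq_or_ne x 0 with rfl | hx
  · have : (Real.toNNReal ((0:ℝ)^2) * Real.toNNReal (σ₂^2) : ℝ≥0) = 0 := by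
      ext; rw [hcoe2]; simp
    rw [this, gaussianPDFReal_zero_var]
    simp
  · rw [gaussianPDFReal, gaussianPDFReal, hcoe1, hcoe2]
    have e1 : √(2*π*σ₁^2) = √(2*π) * σ₁ := by
      rw [Real.sqrt_mul hπ.le, Real.sqrt_sq hσ₁.le]
    have e2 : √(2*π*(x^2*σ₂^2)) = √(2*π) * (|x| * σ₂) := by
      rw [Real.sqrt_mul hπ.le, Real.sqrt_mul (sq_nonneg x), Real.sqrt_sq_eq_abs,
        Real.sqrt_sq hσ₂.le]
    have e3 : √(2*π) * √(2*π) = 2*π := Real.mul_self_sqrt hπ.le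
    have hxa : |x| ≠ 0 := abs_ne_zero.2 hx
    rw [e1, e2, sub_zero, sub_zero, mul_mul_mul_comm, ← Real.exp_add]
    have e4 : -x^2/(2*σ₁^2) + -u^2/(2*(x^2*σ₂^2)) = -(x^2/(2*σ₁^2) + u^2/(2*(σ₂^2*x^2))) := by
      field_simp
      ring
    rw [e4]
    have e5 : (√(2*π) * σ₁)⁻¹ * (√(2*π) * (|x| * σ₂))⁻¹ = (2*π*(σ₁*σ₂))⁻¹ * |x|⁻¹ := by
      calc (√(2*π) * σ₁)⁻¹ * (√(2*π) * (|x| * σ₂))⁻¹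
          = (√(2*π) * √(2*π))⁻¹ * (σ₁ * (|x| * σ₂))⁻¹ := by
            rw [mul_inv, mul_inv, mul_inv, mul_inv]; ring
        _ = (2*π*(σ₁*σ₂))⁻¹ * |x|⁻¹ := by rw [e3, mul_inv, mul_inv, mul_inv]; ring
    rw [e5, mul_assoc]

lemma inner_lintegral (σ₁ σ₂ : ℝ) (hσ₁ : 0 < σ₁) (hσ₂ : 0 < σ₂) {u : ℝ} (hu : u ≠ 0) :
    ∫⁻ x, ENNReal.ofReal (gaussianPDFReal 0 (Real.toNNReal (σ₁^2)) x *
        gaussianPDFReal 0 (Real.toNNReal (x^2) * Real.toNNReal (σ₂^2)) u)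
      = ENNReal.ofReal (1 / (π * (σ₁ * σ₂)) * besselK0 (|u| / (σ₁ * σ₂))) := by
  have hπ : (0:ℝ) < π := Real.pi_pos
  set z : ℝ := |u| / (σ₁ * σ₂) with hz_def
  have hz : 0 < z := by
    apply div_pos (abs_pos.2 hu) (by positivity)
  simp only [prod_pdf_eq σ₁ σ₂ hσ₁ hσ₂ u]
  -- pull out constant
  have hC : (0:ℝ) ≤ (2*π*(σ₁*σ₂))⁻¹ := by positivity
  simp_rw [ENNReal.ofReal_mul hC]
  rw [lintegral_const_mul' _ _ ENNReal.ofReal_ne_top]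
  -- evenness
  set g₀ : ℝ → ℝ≥0∞ := fun x =>
    ENNReal.ofReal (|x|⁻¹ * Real.exp (-(x^2/(2*σ₁^2) + u^2/(2*(σ₂^2*x^2))))) with hg₀
  have heven : ∀ x, g₀ (-x) = g₀ x := by
    intro x; simp only [hg₀, abs_neg, neg_sq]
  rw [lintegral_even' g₀ heven]
  -- substitution x = c * exp t on Ioi 0
  set c : ℝ := Real.sqrt (σ₁ * |u| / σ₂) with hc_def
  have hcpos : 0 < c := Real.sqrt_pos.2 (by positivity)
  have hc2 : c^2 = σ₁ * |u| / σ₂ := Real.sq_sqrt (by positivity)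
  have himg : (fun t : ℝ => c * Real.exp t) '' univ = Ioi (0:ℝ) := by
    ext y
    simp only [image_univ, mem_range, mem_Ioi]
    constructor
    · rintro ⟨t, rfl⟩; positivity
    · intro hy
      exact ⟨Real.log (y / c), by
        rw [Real.exp_log (by positivity)]
        field_simp⟩
  have hsub : ∫⁻ x in Ioi (0:ℝ), g₀ x
      = ∫⁻ t, ENNReal.ofReal |c * Real.exp t| * g₀ (c * Real.exp t) := by
    rw [← himg, lintegral_image_eq_lintegral_abs_deriv_mul' MeasurableSet.univ
      (f' := fun t => c * Real.exp t)
      (fun t _ => ((Real.hasDerivAt_exp t).const_mul c).hasDerivWithinAt)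
      (fun s _ t _ h => by
        have := Real.exp_injective (mul_left_cancel₀ hcpos.ne' h)
        exact this) g₀, Measure.restrict_univ]
  have hpoint : ∀ t : ℝ, ENNReal.ofReal |c * Real.exp t| * g₀ (c * Real.exp t)
      = ENNReal.ofReal (Real.exp (-(z * Real.cosh (2*t)))) := by
    intro t
    have hxpos : 0 < c * Real.exp t := by positivity
    have hE : (c * Real.exp t)^2/(2*σ₁^2) + u^2/(2*(σ₂^2*(c * Real.exp t)^2))
        = z * Real.cosh (2*t) := by
      have h2t : Real.exp (2*t) = Real.exp t ^ 2 := by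
        rw [two_mul, Real.exp_add]; ring
      rw [Real.cosh_eq, Real.exp_neg, h2t, mul_pow, hc2, ← sq_abs u, hz_def]
      have he : Real.exp t ≠ 0 := (Real.exp_pos t).ne'
      have hun : |u| ≠ 0 := abs_ne_zero.2 hu
      field_simp
    simp only [hg₀]
    rw [abs_of_pos hxpos, hE,
      ← ENNReal.ofReal_mul hxpos.le, ← mul_assoc, mul_inv_cancel₀ hxpos.ne', one_mul]
  -- substitution s = 2 t
  have hdouble : (2:ℝ≥0∞) * ∫⁻ t, ENNReal.ofReal (Real.exp (-(z * Real.cosh (2*t))))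
      = ∫⁻ s, ENNReal.ofReal (Real.exp (-(z * Real.cosh s))) := by
    have himg2 : (fun t : ℝ => 2 * t) '' univ = univ := by
      apply Set.image_univ_of_surjective
      intro y; exact ⟨y/2, by ring⟩
    calc (2:ℝ≥0∞) * ∫⁻ t, ENNReal.ofReal (Real.exp (-(z * Real.cosh (2*t))))
        = ∫⁻ t, ENNReal.ofReal |(2:ℝ)| * ENNReal.ofReal (Real.exp (-(z * Real.cosh (2*t)))) := by
          rw [lintegral_const_mul' _ _ ENNReal.ofReal_ne_top]
          norm_num
      _ = ∫⁻ s in (fun t : ℝ => 2 * t) '' univ, ENNReal.ofReal (Real.exp (-(z * Real.cosh s))) := by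
          rw [lintegral_image_eq_lintegral_abs_deriv_mul' MeasurableSet.univ
            (f' := fun _ => (2:ℝ))
            (fun t _ => by simpa using ((hasDerivAt_id t).const_mul 2).hasDerivWithinAt (s := univ))
            (fun s _ t _ h => by simpa using mul_left_cancel₀ (two_ne_zero) h),
            Measure.restrict_univ]
      _ = ∫⁻ s, ENNReal.ofReal (Real.exp (-(z * Real.cosh s))) := by
          rw [himg2, Measure.restrict_univ]
  have hcoshe : ∫⁻ s, ENNReal.ofReal (Real.exp (-(z * Real.cosh s)))
      = 2 * ENNReal.ofReal (besselK0 z) := by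
    rw [lintegral_even' _ (fun s => by rw [Real.cosh_neg]),
      lintegral_ofReal_exp_neg_mul_cosh hz]
  have hB : ∫⁻ t, ENNReal.ofReal (Real.exp (-(z * Real.cosh (2*t))))
      = ENNReal.ofReal (besselK0 z) := by
    have h2 : (2:ℝ≥0∞) ≠ 0 := two_ne_zero
    have h2' : (2:ℝ≥0∞) ≠ ⊤ := ENNReal.ofNat_ne_top
    have := hdouble.trans hcoshe
    exact (ENNReal.mul_right_inj h2 h2').mp this
  rw [hsub]
  simp_rw [hpoint]
  rw [hB]
  rw [← ENNReal.ofReal_ofNat, ← ENNReal.ofReal_mul (by positivity),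
    ← ENNReal.ofReal_mul (by positivity)]
  congr 1
  have : (2*π*(σ₁*σ₂))⁻¹ * 2 = 1 / (π * (σ₁ * σ₂)) := by
    field_simp
  rw [← mul_assoc, this]

/-- The product of two independent zero-mean normals with standard deviations `σ₁, σ₂`
has density `x ↦ (1/(π σ₁ σ₂)) K₀(|x|/(σ₁σ₂))`. -/
theorem pdf_product_two_normals
    {Ω : Type*} [MeasureSpace Ω] [IsProbabilityMeasure (ℙ : Measure Ω)]
    (σ₁ σ₂ : ℝ) (hσ₁ : 0 < σ₁) (hσ₂ : 0 < σ₂)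
    (X₁ X₂ : Ω → ℝ) (hX₁ : Measurable X₁) (hX₂ : Measurable X₂)
    (hlaw₁ : Measure.map X₁ ℙ = gaussianReal 0 (Real.toNNReal (σ₁ ^ 2)))
    (hlaw₂ : Measure.map X₂ ℙ = gaussianReal 0 (Real.toNNReal (σ₂ ^ 2)))
    (hindep : IndepFun X₁ X₂ ℙ) :
    ∀ a : ℝ, ℙ {ω | X₁ ω * X₂ ω ≤ a} =
      ENNReal.ofReal (∫ x in Set.Iic a, (1 / (Real.pi * (σ₁ * σ₂))) * besselK0 (|x| / (σ₁ * σ₂))) := by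
  intro a
  have hπ : (0:ℝ) < π := Real.pi_pos
  set v₁ : ℝ≥0 := Real.toNNReal (σ₁^2) with hv₁def
  set v₂ : ℝ≥0 := Real.toNNReal (σ₂^2) with hv₂def
  have hv₁ : v₁ ≠ 0 := (Real.toNNReal_pos.2 (by positivity)).ne'
  have hv₂ : v₂ ≠ 0 := (Real.toNNReal_pos.2 (by positivity)).ne'
  have hS : MeasurableSet {p : ℝ × ℝ | p.1 * p.2 ≤ a} :=
    measurableSet_le (measurable_fst.mul measurable_snd) measurable_const
  have hmap : Measure.map (fun ω => (X₁ ω, X₂ ω)) ℙ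
      = (gaussianReal 0 v₁).prod (gaussianReal 0 v₂) := by
    rw [(indepFun_iff_map_prod_eq_prod_map_map hX₁.aemeasurable hX₂.aemeasurable).mp hindep,
      hlaw₁, hlaw₂]
  -- the slice density
  set G : ℝ → ℝ → ℝ≥0∞ :=
    fun x u => ENNReal.ofReal (gaussianPDFReal 0 (Real.toNNReal (x^2) * v₂) u) with hGdef
  have hcoe : ∀ x : ℝ, ((Real.toNNReal (x^2) * v₂ : ℝ≥0) : ℝ) = x^2 * σ₂^2 := by
    intro x
    push_cast [hv₂def, Real.coe_toNNReal _ (sq_nonneg σ₂), Real.coe_toNNReal _ (sq_nonneg x)]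
    ring
  have hGm : Measurable (Function.uncurry G) := by
    have : Function.uncurry G = fun p : ℝ × ℝ =>
        ENNReal.ofReal ((√(2*π*(p.1^2*σ₂^2)))⁻¹ * Real.exp (-(p.2-0)^2/(2*(p.1^2*σ₂^2)))) := by
      funext p
      simp only [Function.uncurry, hGdef, gaussianPDFReal, hcoe p.1]
    rw [this]
    apply Measurable.ennreal_ofReal
    apply Measurable.mul
    · exact (Real.continuous_sqrt.measurable.comp (by fun_prop)).inv
    · exact Real.measurable_exp.comp (by fun_prop)
  have hF : Measurable (fun x => ∫⁻ u in Iic a, G x u) :=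
    Measurable.lintegral_prod_right hGm
  -- key chain
  have key : ℙ {ω | X₁ ω * X₂ ω ≤ a}
      = ∫⁻ u in Iic a, ENNReal.ofReal (1/(π*(σ₁*σ₂)) * besselK0 (|u|/(σ₁*σ₂))) := by
    have h0ae : ∀ᵐ x ∂(gaussianReal 0 v₁), x ≠ 0 := by
      have : (gaussianReal 0 v₁) {(0:ℝ)} = 0 :=
        gaussianReal_absolutelyContinuous 0 hv₁ (volume_singleton)
      filter_upwards [measure_eq_zero_iff_ae_notMem.mp this] with x hx
      simpa using hx
    calc ℙ {ω | X₁ ω * X₂ ω ≤ a}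
        = ((gaussianReal 0 v₁).prod (gaussianReal 0 v₂)) {p : ℝ × ℝ | p.1 * p.2 ≤ a} := by
          rw [← hmap, Measure.map_apply (hX₁.prodMk hX₂) hS]
          rfl
      _ = ∫⁻ x, (gaussianReal 0 v₂) (Prod.mk x ⁻¹' {p : ℝ × ℝ | p.1 * p.2 ≤ a})
            ∂(gaussianReal 0 v₁) := Measure.prod_apply hS
      _ = ∫⁻ x, (∫⁻ u in Iic a, G x u) ∂(gaussianReal 0 v₁) := by
          apply lintegral_congr_ae
          filter_upwards [h0ae] with x hx
          have hpre : Prod.mk x ⁻¹' {p : ℝ × ℝ | p.1 * p.2 ≤ a}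
              = (fun y => x * y) ⁻¹' (Iic a) := rfl
          have hanon : (NNReal.mk (x^2) (sq_nonneg x) : ℝ≥0) = Real.toNNReal (x^2) := by
            ext; simp [Real.coe_toNNReal _ (sq_nonneg x)]
          have hv' : (Real.toNNReal (x^2) * v₂ : ℝ≥0) ≠ 0 := by
            apply mul_ne_zero _ hv₂
            exact (Real.toNNReal_pos.2 (by positivity)).ne'
          rw [hpre, ← Measure.map_apply (measurable_const_mul x) measurableSet_Iic,
            gaussianReal_map_const_mul x, mul_zero, hanon,
            gaussianReal_apply _ hv' (Iic a)]
          rfl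
      _ = ∫⁻ x, gaussianPDF 0 v₁ x * (∫⁻ u in Iic a, G x u) := by
          rw [gaussianReal_of_var_ne_zero 0 hv₁,
            lintegral_withDensity_eq_lintegral_mul _ (measurable_gaussianPDF _ _) hF]
          rfl
      _ = ∫⁻ x, (∫⁻ u in Iic a, gaussianPDF 0 v₁ x * G x u) := by
          congr 1; funext x
          rw [← lintegral_const_mul' (gaussianPDF 0 v₁ x) _
            (by rw [gaussianPDF]; exact ENNReal.ofReal_ne_top)]
      _ = ∫⁻ u in Iic a, (∫⁻ x, gaussianPDF 0 v₁ x * G x u) := by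
          apply lintegral_lintegral_swap
          exact (((measurable_gaussianPDF 0 v₁).comp measurable_fst).mul hGm).aemeasurable
      _ = ∫⁻ u in Iic a, ENNReal.ofReal (1/(π*(σ₁*σ₂)) * besselK0 (|u|/(σ₁*σ₂))) := by
          apply lintegral_congr_ae
          have h0ae' : ∀ᵐ u ∂(volume.restrict (Iic a)), u ≠ (0:ℝ) := by
            apply ae_restrict_of_ae
            filter_upwards [measure_eq_zero_iff_ae_notMem.mp (volume_singleton (a := (0:ℝ)))] with u hu
            simpa using hu
          filter_upwards [h0ae'] with u hu
          have : ∀ x : ℝ, gaussianPDF 0 v₁ x * G x u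
              = ENNReal.ofReal (gaussianPDFReal 0 v₁ x *
                  gaussianPDFReal 0 (Real.toNNReal (x^2) * v₂) u) := by
            intro x
            rw [ENNReal.ofReal_mul (gaussianPDFReal_nonneg _ _ _)]
            rfl
          simp_rw [this]
          exact inner_lintegral σ₁ σ₂ hσ₁ hσ₂ hu
  rw [key]
  -- convert to Bochner integral
  set f : ℝ → ℝ := fun u => 1/(π*(σ₁*σ₂)) * besselK0 (|u|/(σ₁*σ₂)) with hfdef
  have hfm : Measurable f := by
    apply Measurable.const_mul
    exact measurable_besselK0.comp ((measurable_abs).div_const _)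
  have hfnn : 0 ≤ᵐ[volume.restrict (Iic a)] f := by
    apply ae_of_all
    intro u
    exact mul_nonneg (by positivity) (besselK0_nonneg _)
  have hfi : Integrable f (volume.restrict (Iic a)) := by
    refine ⟨hfm.aestronglyMeasurable, ?_⟩
    rw [hasFiniteIntegral_iff_ofReal hfnn]
    rw [← key]
    exact measure_lt_top ℙ _
  rw [← ofReal_integral_eq_lintegral_ofReal hfi hfnn]
end

section
/- Let C₁, C₂ be independent standard Cauchy random variables. Then the product Z₂ = C₁C₂ has probability density function f(z) = 2 ln|z| / (π² (z² - 1)) for z ∉ {-1, 0, 1}. -/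
open MeasureTheory ProbabilityTheory Real Set
open scoped ENNReal NNReal

noncomputable def cau (x : ℝ) : ℝ := 1 / (Real.pi * (1 + x ^ 2))

lemma cau_nonneg (x : ℝ) : 0 ≤ cau x := by
  unfold cau; positivity

lemma cau_cont : Continuous cau := by
  unfold cau
  exact continuous_const.div (continuous_const.mul (by continuity)) (fun x => by positivity)

lemma cau_meas : Measurable cau := cau_cont.measurable

lemma cau_eq (x : ℝ) : cau x = π⁻¹ * (1 + x ^ 2)⁻¹ := by
  unfold cau; rw [one_div, mul_inv]

lemma integrable_cau : Integrable cau := by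
  have : cau = fun x => π⁻¹ * (1 + x ^ 2)⁻¹ := funext cau_eq
  rw [this]; exact integrable_inv_one_add_sq.const_mul _

lemma integral_cau : ∫ x, cau x = 1 := by
  simp only [cau_eq]
  rw [integral_const_mul, integral_univ_inv_one_add_sq, inv_mul_cancel₀ pi_ne_zero]

noncomputable def μcau : Measure ℝ := volume.withDensity fun x => ENNReal.ofReal (cau x)

lemma μcau_apply {s : Set ℝ} (hs : MeasurableSet s) :
    μcau s = ∫⁻ x in s, ENNReal.ofReal (cau x) := withDensity_apply _ hs

lemma ofReal_setIntegral_cau {s : Set ℝ} :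
    ENNReal.ofReal (∫ x in s, cau x) = ∫⁻ x in s, ENNReal.ofReal (cau x) :=
  ofReal_integral_eq_lintegral_ofReal integrable_cau.integrableOn
    (Filter.Eventually.of_forall cau_nonneg)

lemma μcau_Iic (a : ℝ) : μcau (Iic a) = ENNReal.ofReal (∫ x in Iic a, cau x) := by
  rw [μcau_apply measurableSet_Iic, ofReal_setIntegral_cau]

instance : IsProbabilityMeasure μcau := by
  constructor
  rw [μcau_apply MeasurableSet.univ, Measure.restrict_univ, ← ofReal_integral_eq_lintegral_ofReal
    integrable_cau (Filter.Eventually.of_forall cau_nonneg), integral_cau, ENNReal.ofReal_one]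

lemma map_law {Ω : Type*} [MeasureSpace Ω] [IsProbabilityMeasure (ℙ : Measure Ω)]
    {C : Ω → ℝ} (hC : Measurable C)
    (hlaw : ∀ a : ℝ, ℙ {ω | C ω ≤ a} =
      ENNReal.ofReal (∫ x in Set.Iic a, 1 / (Real.pi * (1 + x ^ 2)))) :
    Measure.map C ℙ = μcau := by
  have : IsProbabilityMeasure (Measure.map C ℙ) := Measure.isProbabilityMeasure_map hC.aemeasurable
  refine Measure.ext_of_Iic _ _ (fun a => ?_)
  rw [Measure.map_apply hC measurableSet_Iic, μcau_Iic]
  exact hlaw a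

lemma key_deriv {c : ℝ} (hc : 0 < c) (hc1 : c ≠ 1) (x : ℝ) :
    HasDerivAt (fun x : ℝ => (Real.log (1 + x ^ 2) - Real.log (x ^ 2 + c)) / (2 * (c - 1)))
      (x / ((1 + x ^ 2) * (x ^ 2 + c))) x := by
  have h1 : (0:ℝ) < 1 + x ^ 2 := by positivity
  have h2 : (0:ℝ) < x ^ 2 + c := by positivity
  have d1 : HasDerivAt (fun x : ℝ => 1 + x ^ 2) (2 * x) x := by
    simpa using ((hasDerivAt_pow 2 x).const_add 1)
  have d2 : HasDerivAt (fun x : ℝ => x ^ 2 + c) (2 * x) x := by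
    simpa using ((hasDerivAt_pow 2 x).add_const c)
  have l1 := (d1.log h1.ne')
  have l2 := (d2.log h2.ne')
  have hc1' : c - 1 ≠ 0 := sub_ne_zero.mpr hc1
  have := ((l1.sub l2).div_const (2 * (c - 1)))
  refine this.congr_deriv ?_
  field_simp
  ring

lemma key_integral {c : ℝ} (hc : 0 < c) (hc1 : c ≠ 1) :
    IntegrableOn (fun x : ℝ => x / ((1 + x ^ 2) * (x ^ 2 + c))) (Ioi 0) ∧
    ∫ x in Ioi (0:ℝ), x / ((1 + x ^ 2) * (x ^ 2 + c)) = Real.log c / (2 * (c - 1)) := by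
  set G : ℝ → ℝ := fun x => (Real.log (1 + x ^ 2) - Real.log (x ^ 2 + c)) / (2 * (c - 1)) with hG
  have hderiv : ∀ x ∈ Ici (0:ℝ), HasDerivAt G (x / ((1 + x ^ 2) * (x ^ 2 + c))) x :=
    fun x _ => key_deriv hc hc1 x
  have hpos : ∀ x ∈ Ioi (0:ℝ), 0 ≤ x / ((1 + x ^ 2) * (x ^ 2 + c)) := by
    intro x hx
    have : (0:ℝ) < x := hx
    positivity
  have htend : Filter.Tendsto G Filter.atTop (nhds 0) := by
    have h1 : Filter.Tendsto (fun x : ℝ => (1 + x ^ 2) / (x ^ 2 + c)) Filter.atTop (nhds 1) := by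
      have heq : ∀ x : ℝ, (1 + x ^ 2) / (x ^ 2 + c) = 1 + (1 - c) / (x ^ 2 + c) := by
        intro x
        have h2 : (0:ℝ) < x ^ 2 + c := by positivity
        field_simp
        ring
      simp_rw [heq]
      have hT : Filter.Tendsto (fun x : ℝ => x ^ 2 + c) Filter.atTop Filter.atTop :=
        Filter.tendsto_atTop_add_const_right _ c (Filter.tendsto_pow_atTop two_ne_zero)
      have := Filter.Tendsto.div_atTop (tendsto_const_nhds (α := ℝ) (x := (1 - c : ℝ))) hT
      simpa using (tendsto_const_nhds (x := (1:ℝ))).add this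
    have h2 : Filter.Tendsto (fun x : ℝ => Real.log ((1 + x ^ 2) / (x ^ 2 + c)))
        Filter.atTop (nhds 0) := by
      have := (Real.continuousAt_log one_ne_zero).tendsto.comp h1
      simpa [Function.comp_def] using this
    have heq : ∀ᶠ x : ℝ in Filter.atTop, Real.log ((1 + x ^ 2) / (x ^ 2 + c)) / (2 * (c - 1)) = G x := by
      filter_upwards with x
      have h1' : (0:ℝ) < 1 + x ^ 2 := by positivity
      have h2' : (0:ℝ) < x ^ 2 + c := by positivity
      rw [hG, Real.log_div h1'.ne' h2'.ne']
    have := (h2.div_const (2 * (c - 1)))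
    rw [zero_div] at this
    exact this.congr' heq
  have hint := integrableOn_Ioi_deriv_of_nonneg' hderiv hpos htend
  refine ⟨hint, ?_⟩
  rw [integral_Ioi_of_hasDerivAt_of_nonneg' hderiv hpos htend]
  have : G 0 = - Real.log c / (2 * (c - 1)) := by
    simp [hG]
  rw [this]
  ring

noncomputable def ker (x z : ℝ) : ℝ := cau x * (cau (z / x) / |x|)

lemma ker_eq (x z : ℝ) : ker x z = |x| / (π ^ 2 * ((1 + x ^ 2) * (x ^ 2 + z ^ 2))) := by
  rcases eq_or_ne x 0 with rfl | hx
  · simp [ker, cau]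
  · have hx' : |x| ≠ 0 := abs_ne_zero.mpr hx
    have h1 : (0:ℝ) < 1 + x ^ 2 := by positivity
    have h2 : (0:ℝ) < x ^ 2 + z ^ 2 := by positivity
    have h3 : (0:ℝ) < 1 + (z / x) ^ 2 := by positivity
    unfold ker cau
    rw [div_pow]
    have hsq : |x| ^ 2 = x ^ 2 := sq_abs x
    field_simp
    rw [← sq_abs x]

lemma ker_nonneg (x z : ℝ) : 0 ≤ ker x z := by
  rw [ker_eq]; positivity

noncomputable def fden (z : ℝ) : ℝ := 2 * Real.log |z| / (Real.pi ^ 2 * (z ^ 2 - 1))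

lemma ker_integral {z : ℝ} (hz0 : z ≠ 0) (hz1 : z ^ 2 ≠ 1) :
    Integrable (fun x => ker x z) ∧ ∫ x, ker x z = fden z := by
  have hc : (0:ℝ) < z ^ 2 := by positivity
  set h : ℝ → ℝ := fun t => t / ((1 + t ^ 2) * (t ^ 2 + z ^ 2)) with hh
  have hker : ∀ x, ker x z = (π ^ 2)⁻¹ * h |x| := by
    intro x
    rw [ker_eq, hh]
    simp only []
    rw [sq_abs]
    have hD : (0:ℝ) < (1 + x ^ 2) * (x ^ 2 + z ^ 2) := by positivity
    field_simp
  have hI : IntegrableOn h (Ioi 0) := (key_integral hc hz1).1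
  have habs_Ioi : IntegrableOn (fun x => h |x|) (Ioi 0) :=
    hI.congr_fun (fun x hx => by rw [abs_of_pos hx]) measurableSet_Ioi
  have habs_Iic : IntegrableOn (fun x => h |x|) (Iic 0) := by
    rw [← Measure.map_neg_eq_self (volume : Measure ℝ)]
    have m : MeasurableEmbedding fun x : ℝ => -x := (Homeomorph.neg ℝ).measurableEmbedding
    rw [m.integrableOn_map_iff]
    simp_rw [Function.comp_def, abs_neg, neg_preimage, neg_Iic, neg_zero]
    rw [integrableOn_Ici_iff_integrableOn_Ioi]
    exact habs_Ioi
  have habs : Integrable (fun x => h |x|) := by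
    rw [← integrableOn_univ, ← Iic_union_Ioi (a := (0:ℝ))]
    exact habs_Iic.union habs_Ioi
  constructor
  · simp_rw [hker]
    exact habs.const_mul _
  · simp_rw [hker]
    rw [integral_const_mul, integral_comp_abs, (key_integral hc hz1).2]
    unfold fden
    have h1 : z ^ 2 - 1 ≠ 0 := sub_ne_zero.mpr hz1
    have h2 : Real.log (z ^ 2) = 2 * Real.log |z| := by
      rw [← sq_abs z, Real.log_pow]
      push_cast
      ring
    field_simp
    nlinarith [h2, pi_ne_zero]

lemma fden_nonneg (z : ℝ) : 0 ≤ fden z := by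
  unfold fden
  rcases lt_trichotomy |z| 1 with h | h | h
  · rcases eq_or_ne z 0 with rfl | hz
    · simp
    · have hl : Real.log |z| < 0 := Real.log_neg (abs_pos.mpr hz) h
      have hd : z ^ 2 - 1 < 0 := by nlinarith [sq_abs z, abs_nonneg z]
      have hd' : π ^ 2 * (z ^ 2 - 1) < 0 := mul_neg_of_pos_of_neg (by positivity) hd
      exact le_of_lt (div_pos_of_neg_of_neg (by linarith) hd')
  · have h2 : z ^ 2 = 1 := by nlinarith [sq_abs z]
    simp [h2]
  · have hl : 0 < Real.log |z| := Real.log_pos h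
    have hd : 0 < z ^ 2 - 1 := by nlinarith [sq_abs z]
    have hd' : 0 < π ^ 2 * (z ^ 2 - 1) := by positivity
    positivity

lemma fden_meas : Measurable fden := by
  unfold fden
  exact (measurable_const.mul (Real.measurable_log.comp measurable_abs)).div
    (measurable_const.mul ((measurable_id.pow_const 2).sub measurable_const))

lemma ker_meas : Measurable fun p : ℝ × ℝ => ENNReal.ofReal (ker p.1 p.2) := by
  apply ENNReal.measurable_ofReal.comp
  unfold ker
  exact (cau_meas.comp measurable_fst).mul
    ((cau_meas.comp (measurable_snd.div measurable_fst)).div measurable_fst.abs)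

lemma mulSlice {x : ℝ} (hx : x ≠ 0) (a : ℝ) :
    μcau {y | x * y ≤ a} = ∫⁻ z in Iic a, ENNReal.ofReal (cau (z / x) / |x|) := by
  have hxs : MeasurableSet {y : ℝ | x * y ≤ a} :=
    measurableSet_le (measurable_const_mul x) measurable_const
  have habs : (0:ℝ) < |x| := abs_pos.mpr hx
  have hgm : Measurable fun z : ℝ => ENNReal.ofReal (cau (z / x) / |x|) :=
    ENNReal.measurable_ofReal.comp ((cau_meas.comp (measurable_id.div_const x)).div_const |x|)
  have hFm : Measurable ((Iic a).indicator fun z : ℝ => ENNReal.ofReal (cau (z / x) / |x|)) :=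
    hgm.indicator measurableSet_Iic
  rw [μcau_apply hxs]
  conv_rhs => rw [← lintegral_indicator measurableSet_Iic, ← Real.smul_map_volume_mul_left hx]
  rw [lintegral_smul_measure, lintegral_map hFm (measurable_const_mul x)]
  have hind : ∀ y : ℝ, (Iic a).indicator (fun z : ℝ => ENNReal.ofReal (cau (z / x) / |x|)) (x * y)
      = {y : ℝ | x * y ≤ a}.indicator (fun y : ℝ => ENNReal.ofReal (cau y / |x|)) y := by
    intro y
    rcases le_or_gt (x * y) a with h | h
    · rw [Set.indicator_of_mem (by exact h : x * y ∈ Iic a),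
        Set.indicator_of_mem (by exact h : y ∈ {y : ℝ | x * y ≤ a}),
        mul_div_cancel_left₀ _ hx]
    · rw [Set.indicator_of_notMem (by exact not_le.mpr h : x * y ∉ Iic a),
        Set.indicator_of_notMem (by exact not_le.mpr h : y ∉ {y : ℝ | x * y ≤ a})]
  simp_rw [hind]
  rw [lintegral_indicator hxs, smul_eq_mul, ← lintegral_const_mul _
    ((cau_meas.div_const |x|).ennreal_ofReal)]
  apply setLIntegral_congr_fun hxs
  intro y _
  beta_reduce
  rw [← ENNReal.ofReal_mul (abs_nonneg x), mul_div_cancel₀ _ habs.ne']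

lemma ae_ne_zero : ∀ᵐ x : ℝ, x ≠ 0 := by
  refine ae_iff.mpr ?_
  simp only [not_not, Set.setOf_eq_eq_singleton]
  exact measure_singleton 0

lemma ae_good (a : ℝ) : ∀ᵐ z : ℝ ∂(volume.restrict (Iic a)), z ≠ 0 ∧ z ^ 2 ≠ 1 := by
  apply ae_restrict_of_ae
  refine ae_iff.mpr (measure_mono_null (fun z hz => ?_)
    ((((Set.finite_singleton ((-1):ℝ)).insert 1).insert 0).measure_zero _))
  simp only [Set.mem_setOf_eq, not_and_or, not_not] at hz
  simp only [Set.mem_insert_iff, Set.mem_singleton_iff]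
  rcases hz with rfl | hz
  · exact Or.inl rfl
  · have : (z - 1) * (z + 1) = 0 := by nlinarith
    rcases mul_eq_zero.mp this with h | h
    · exact Or.inr (Or.inl (by linarith))
    · exact Or.inr (Or.inr (by linarith))


set_option maxHeartbeats 1000000 in
/-- The product of two independent standard Cauchy random variables has density
`z ↦ 2 ln|z| / (π² (z² − 1))`. -/
theorem pdf_product_two_cauchy
    {Ω : Type*} [MeasureSpace Ω] [IsProbabilityMeasure (ℙ : Measure Ω)]
    (C₁ C₂ : Ω → ℝ) (hC₁ : Measurable C₁) (hC₂ : Measurable C₂)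
    (hlaw₁ : ∀ a : ℝ, ℙ {ω | C₁ ω ≤ a} =
      ENNReal.ofReal (∫ x in Set.Iic a, 1 / (Real.pi * (1 + x ^ 2))))
    (hlaw₂ : ∀ a : ℝ, ℙ {ω | C₂ ω ≤ a} =
      ENNReal.ofReal (∫ x in Set.Iic a, 1 / (Real.pi * (1 + x ^ 2))))
    (hindep : IndepFun C₁ C₂ ℙ) :
    ∀ a : ℝ, ℙ {ω | C₁ ω * C₂ ω ≤ a} =
      ENNReal.ofReal (∫ z in Set.Iic a, 2 * Real.log |z| / (Real.pi ^ 2 * (z ^ 2 - 1))) := by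
  intro a
  show _ = ENNReal.ofReal (∫ z in Set.Iic a, fden z)
  have hS : MeasurableSet {p : ℝ × ℝ | p.1 * p.2 ≤ a} :=
    measurableSet_le (measurable_fst.mul measurable_snd) measurable_const
  have hmap : Measure.map (fun ω => (C₁ ω, C₂ ω)) ℙ = μcau.prod μcau := by
    rw [(indepFun_iff_map_prod_eq_prod_map_map hC₁.aemeasurable hC₂.aemeasurable).mp hindep,
      map_law hC₁ hlaw₁, map_law hC₂ hlaw₂]
  have h1 : ℙ {ω | C₁ ω * C₂ ω ≤ a} = (μcau.prod μcau) {p : ℝ × ℝ | p.1 * p.2 ≤ a} := by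
    rw [← hmap, Measure.map_apply (hC₁.prodMk hC₂) hS]
    rfl
  have h2 : (μcau.prod μcau) {p : ℝ × ℝ | p.1 * p.2 ≤ a}
      = ∫⁻ x, μcau {y | x * y ≤ a} ∂μcau := by
    rw [Measure.prod_apply hS]
    rfl
  have hmeasμ : Measurable fun x : ℝ => μcau {y | x * y ≤ a} :=
    measurable_measure_prodMk_left (ν := μcau) hS
  have h3 : ∫⁻ x, μcau {y | x * y ≤ a} ∂μcau
      = ∫⁻ x, ENNReal.ofReal (cau x) * μcau {y | x * y ≤ a} :=
    lintegral_withDensity_eq_lintegral_mul volume cau_meas.ennreal_ofReal hmeasμ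
  have h4 : ∫⁻ x, ENNReal.ofReal (cau x) * μcau {y | x * y ≤ a}
      = ∫⁻ x, ∫⁻ z in Iic a, ENNReal.ofReal (ker x z) := by
    apply lintegral_congr_ae
    filter_upwards [ae_ne_zero] with x hx
    have hm : Measurable fun z : ℝ => ENNReal.ofReal (cau (z / x) / |x|) :=
      ((cau_meas.comp (measurable_id.div_const x)).div_const |x|).ennreal_ofReal
    rw [mulSlice hx a, ← lintegral_const_mul _ hm]
    apply lintegral_congr
    intro z
    rw [← ENNReal.ofReal_mul (cau_nonneg x)]
    rfl
  have h5 : ∫⁻ x, ∫⁻ z in Iic a, ENNReal.ofReal (ker x z)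
      = ∫⁻ z in Iic a, ∫⁻ x, ENNReal.ofReal (ker x z) :=
    lintegral_lintegral_swap ker_meas.aemeasurable
  have h6 : ∫⁻ z in Iic a, ∫⁻ x, ENNReal.ofReal (ker x z)
      = ∫⁻ z in Iic a, ENNReal.ofReal (fden z) := by
    apply lintegral_congr_ae
    filter_upwards [ae_good a] with z hz
    rw [← ofReal_integral_eq_lintegral_ofReal (ker_integral hz.1 hz.2).1
      (Filter.Eventually.of_forall fun x => ker_nonneg x z), (ker_integral hz.1 hz.2).2]
  have hchain : ℙ {ω | C₁ ω * C₂ ω ≤ a} = ∫⁻ z in Iic a, ENNReal.ofReal (fden z) := by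
    rw [h1, h2, h3, h4, h5, h6]
  have hne : ∫⁻ z in Iic a, ENNReal.ofReal (fden z) ≠ ⊤ := by
    rw [← hchain]; exact measure_ne_top _ _
  rw [hchain, integral_eq_lintegral_of_nonneg_ae (Filter.Eventually.of_forall fden_nonneg)
    fden_meas.aestronglyMeasurable, ENNReal.ofReal_toReal hne]
end

section
/- The function f(z) = 2 ln|z| / (π² (z² − 1)) (with f(±1) := 1/π², f(0) := +∞ interpreted as an improper integrand) is a probability density: it is nonnegative on ℝ ∖ {0, ±1} and ∫_{-∞}^{∞} 2 ln|z|/(π²(z²−1)) dz = 1. -/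
open MeasureTheory Real Set Filter Topology
open scoped ENNReal

private lemma summable_odd_sq : Summable (fun k : ℕ => (1:ℝ) / (2*(k:ℝ)+1)^2) := by
  have h : Summable (fun n : ℕ => (1:ℝ) / (n:ℝ)^2) := by
    simpa using Real.summable_one_div_nat_pow.mpr (by norm_num : 1 ≤ 2)
  have hinj : Function.Injective (fun k : ℕ => 2*k+1) := fun a b hab => by simpa using hab
  have := h.comp_injective hinj
  refine this.congr fun k => ?_
  simp only [Function.comp]
  push_cast
  ring_nf

private lemma odd_basel : ∑' k : ℕ, (1:ℝ) / (2*(k:ℝ)+1)^2 = π^2/8 := by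
  have hζ : HasSum (fun n : ℕ => (1:ℝ)/(n:ℝ)^2) (π^2/6) := hasSum_zeta_two
  have h4 : (fun k : ℕ => (1:ℝ)/4 * (1/(k:ℝ)^2)) = fun k : ℕ => (1:ℝ)/((2*k:ℕ):ℝ)^2 := by
    funext k
    push_cast
    rcases eq_or_ne (k:ℝ) 0 with h | h
    · simp [h]
    · field_simp; ring
  have heven : HasSum (fun k : ℕ => (1:ℝ)/((2*k:ℕ):ℝ)^2) (π^2/24) := by
    have := hζ.mul_left (1/4)
    rw [h4] at this
    rw [show π^2/24 = 1/4*(π^2/6) by ring]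
    exact this
  have hodd : Summable (fun k : ℕ => (1:ℝ)/((2*k+1:ℕ):ℝ)^2) := by
    have hinj : Function.Injective (fun k : ℕ => 2*k+1) := fun a b hab => by simpa using hab
    exact hζ.summable.comp_injective hinj
  have key := tsum_even_add_odd (f := fun n : ℕ => (1:ℝ)/(n:ℝ)^2) heven.summable hodd
  rw [hζ.tsum_eq, heven.tsum_eq] at key
  have h5 : ∑' k : ℕ, (1:ℝ)/(2*(k:ℝ)+1)^2 = ∑' k : ℕ, (1:ℝ)/((2*k+1:ℕ):ℝ)^2 := by
    apply tsum_congr; intro k; push_cast; ring_nf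
  rw [h5]
  linarith

private lemma hasDeriv_A (n : ℕ) {x : ℝ} (hx : 0 < x) :
    HasDerivAt (fun t : ℝ => -Real.log t * t^(n+1) * ((n:ℝ)+1)⁻¹ + t^(n+1) * (((n:ℝ)+1)^2)⁻¹)
      (-Real.log x * x^n) x := by
  have h1 : HasDerivAt Real.log x⁻¹ x := Real.hasDerivAt_log hx.ne'
  have h2 : HasDerivAt (fun t : ℝ => t^(n+1)) (((n:ℝ)+1) * x^n) x := by
    simpa using hasDerivAt_pow (n+1) x
  have h3 := ((h1.neg.mul h2).mul_const ((n:ℝ)+1)⁻¹).add (h2.mul_const ((((n:ℝ)+1)^2)⁻¹))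
  refine h3.congr_deriv ?_
  have hn : ((n:ℝ)+1) ≠ 0 := by positivity
  have hx0 : x ≠ 0 := hx.ne'
  field_simp
  simp
  ring

private lemma contA (n : ℕ) :
    ContinuousOn (fun t : ℝ => -Real.log t * t^(n+1) * ((n:ℝ)+1)⁻¹ + t^(n+1) * (((n:ℝ)+1)^2)⁻¹)
      (Icc 0 1) := by
  intro x hx
  rcases eq_or_lt_of_le hx.1 with h0 | h0
  · apply ContinuousWithinAt.mono _ (Icc_subset_Ici_self : Icc (0:ℝ) 1 ⊆ Ici 0)
    rw [← h0, ← continuousWithinAt_Ioi_iff_Ici]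
    have hto : Tendsto (fun t:ℝ => -Real.log t * t^(n+1) * ((n:ℝ)+1)⁻¹
        + t^(n+1) * (((n:ℝ)+1)^2)⁻¹) (𝓝[>] (0:ℝ)) (𝓝 0) := by
      have l1 : Tendsto (fun t:ℝ => Real.log t * t^(n+1)) (𝓝[>] (0:ℝ)) (𝓝 0) := by
        have h := tendsto_log_mul_rpow_nhdsGT_zero (r := (n:ℝ)+1) (by positivity)
        refine h.congr' ?_
        filter_upwards [self_mem_nhdsWithin] with t ht
        rw [show ((n:ℝ)+1) = ((n+1 : ℕ):ℝ) by push_cast; ring, Real.rpow_natCast]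
      have l2 : Tendsto (fun t:ℝ => t^(n+1) * (((n:ℝ)+1)^2)⁻¹) (𝓝[>] (0:ℝ)) (𝓝 0) := by
        have h : Tendsto (fun t:ℝ => t^(n+1) * (((n:ℝ)+1)^2)⁻¹) (𝓝 (0:ℝ))
            (𝓝 ((0:ℝ)^(n+1) * (((n:ℝ)+1)^2)⁻¹)) :=
          ((continuous_pow (n+1)).mul continuous_const).tendsto 0
        simpa using h.mono_left nhdsWithin_le_nhds
      simpa using ((l1.neg.mul_const (((n:ℝ)+1)⁻¹)).add l2)
    have hval : -Real.log 0 * (0:ℝ)^(n+1) * ((n:ℝ)+1)⁻¹ + (0:ℝ)^(n+1) * (((n:ℝ)+1)^2)⁻¹ = 0 := by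
      simp
    unfold ContinuousWithinAt
    convert hto using 2
  · exact (((Real.continuousAt_log h0.ne').neg.mul
      ((continuous_pow (n+1)).continuousAt)).mul continuousAt_const |>.add
      (((continuous_pow (n+1)).continuousAt).mul continuousAt_const)).continuousWithinAt

private lemma intA (n : ℕ) : IntegrableOn (fun t : ℝ => -Real.log t * t^n) (Ioo 0 1) volume ∧
    ∫ t in Ioo (0:ℝ) 1, -Real.log t * t^n = 1/((n:ℝ)+1)^2 := by
  have hderiv : ∀ x ∈ Ioo (0:ℝ) 1, HasDerivAt (fun t : ℝ => -Real.log t * t^(n+1) * ((n:ℝ)+1)⁻¹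
      + t^(n+1) * (((n:ℝ)+1)^2)⁻¹) (-Real.log x * x^n) x := fun x hx => hasDeriv_A n hx.1
  have hpos : ∀ x ∈ Ioo (0:ℝ) 1, 0 ≤ -Real.log x * x^n := fun x hx =>
    mul_nonneg (neg_nonneg.2 (Real.log_nonpos hx.1.le hx.2.le)) (pow_nonneg hx.1.le n)
  have hint : IntegrableOn (fun t : ℝ => -Real.log t * t^n) (Ioc 0 1) volume :=
    intervalIntegral.integrableOn_deriv_of_nonneg (contA n) hderiv hpos
  refine ⟨hint.mono_set Ioo_subset_Ioc_self, ?_⟩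
  rw [← integral_Ioc_eq_integral_Ioo, ← intervalIntegral.integral_of_le zero_le_one,
    intervalIntegral.integral_eq_sub_of_hasDerivAt_of_le zero_le_one (contA n) hderiv
      ((intervalIntegrable_iff_integrableOn_Ioc_of_le zero_le_one).mpr hint)]
  norm_num

private lemma hasDeriv_B (k : ℕ) {x : ℝ} (hx : 0 < x) :
    HasDerivAt (fun t : ℝ => -(Real.log t * (t⁻¹)^(2*k+1)) * (2*(k:ℝ)+1)⁻¹
        - (t⁻¹)^(2*k+1) * ((2*(k:ℝ)+1)^2)⁻¹)
      (Real.log x * (x⁻¹)^(2*k+2)) x := by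
  have h1 : HasDerivAt Real.log x⁻¹ x := Real.hasDerivAt_log hx.ne'
  have h2 : HasDerivAt (fun t : ℝ => (t⁻¹)^(2*k+1))
      ((2*(k:ℝ)+1) * (x⁻¹)^(2*k) * (-(x^2)⁻¹)) x := by
    have := (hasDerivAt_inv hx.ne').pow (2*k+1)
    refine this.congr_deriv ?_
    rw [Nat.add_sub_cancel]; push_cast; ring
  have h3 := (((h1.mul h2).neg).mul_const ((2*(k:ℝ)+1)⁻¹)).sub
    (h2.mul_const (((2*(k:ℝ)+1)^2)⁻¹))
  refine h3.congr_deriv ?_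
  have h0 : (2*(k:ℝ)+1) ≠ 0 := by positivity
  have hx0 : x ≠ 0 := hx.ne'
  simp only [inv_pow]
  field_simp
  ring

private lemma intB (k : ℕ) :
    IntegrableOn (fun t : ℝ => Real.log t * (t⁻¹)^(2*k+2)) (Ioi 1) volume ∧
    ∫ t in Ioi (1:ℝ), Real.log t * (t⁻¹)^(2*k+2) = 1/(2*(k:ℝ)+1)^2 := by
  have hderiv : ∀ x ∈ Ici (1:ℝ), HasDerivAt (fun t : ℝ => -(Real.log t * (t⁻¹)^(2*k+1))
      * (2*(k:ℝ)+1)⁻¹ - (t⁻¹)^(2*k+1) * ((2*(k:ℝ)+1)^2)⁻¹)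
      (Real.log x * (x⁻¹)^(2*k+2)) x :=
    fun x hx => hasDeriv_B k (lt_of_lt_of_le one_pos hx)
  have hpos : ∀ x ∈ Ioi (1:ℝ), 0 ≤ Real.log x * (x⁻¹)^(2*k+2) := fun x hx =>
    mul_nonneg (Real.log_nonneg hx.out.le)
      (pow_nonneg (inv_nonneg.2 (by linarith [hx.out])) _)
  have htend : Tendsto (fun t : ℝ => -(Real.log t * (t⁻¹)^(2*k+1)) * (2*(k:ℝ)+1)⁻¹
      - (t⁻¹)^(2*k+1) * ((2*(k:ℝ)+1)^2)⁻¹) atTop (𝓝 0) := by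
    have l1 : Tendsto (fun t:ℝ => Real.log t * (t⁻¹)^(2*k+1)) atTop (𝓝 0) := by
      have hle : ∀ᶠ t in (atTop : Filter ℝ), Real.log t * (t⁻¹)^(2*k+1) ≤ Real.log t / t := by
        filter_upwards [Filter.eventually_ge_atTop (1:ℝ)] with t ht
        have h2 : (0:ℝ) ≤ t⁻¹ := inv_nonneg.2 (by linarith)
        have h1 : (t:ℝ)⁻¹ ≤ 1 := by
          rw [inv_le_one_iff₀]; right; exact ht
        calc Real.log t * (t⁻¹)^(2*k+1) ≤ Real.log t * t⁻¹ :=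
              mul_le_mul_of_nonneg_left (pow_le_of_le_one h2 h1 (by omega)) (Real.log_nonneg ht)
          _ = Real.log t / t := by rw [div_eq_mul_inv]
      have hge : ∀ᶠ t in (atTop : Filter ℝ), 0 ≤ Real.log t * (t⁻¹)^(2*k+1) := by
        filter_upwards [Filter.eventually_ge_atTop (1:ℝ)] with t ht
        exact mul_nonneg (Real.log_nonneg ht) (pow_nonneg (inv_nonneg.2 (by linarith)) _)
      have hdiv : Tendsto (fun t:ℝ => Real.log t / t) atTop (𝓝 0) := by
        simpa using Real.isLittleO_log_id_atTop.tendsto_div_nhds_zero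
      exact squeeze_zero' hge hle hdiv
    have l2 : Tendsto (fun t:ℝ => (t⁻¹)^(2*k+1)) atTop (𝓝 0) := by
      have h := ((continuous_pow (2*k+1)).tendsto 0).comp (tendsto_inv_atTop_zero (𝕜 := ℝ))
      have : ((fun a : ℝ => a ^ (2*k+1)) ∘ fun r : ℝ => r⁻¹) = fun t : ℝ => (t⁻¹)^(2*k+1) := rfl
      rw [this] at h
      simpa using h
    simpa using ((l1.neg.mul_const ((2*(k:ℝ)+1)⁻¹)).sub (l2.mul_const (((2*(k:ℝ)+1)^2)⁻¹)))
  refine ⟨integrableOn_Ioi_deriv_of_nonneg' hderiv hpos htend, ?_⟩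
  rw [integral_Ioi_of_hasDerivAt_of_nonneg' hderiv hpos htend]
  norm_num

private lemma hasSumA' {t : ℝ} (ht : t ∈ Ioo (0:ℝ) 1) :
    HasSum (fun k : ℕ => -Real.log t * t^(2*k)) (Real.log t / (t^2 - 1)) := by
  have h2 : t^2 < 1 := by nlinarith [ht.1, ht.2]
  have hg := (hasSum_geometric_of_lt_one (sq_nonneg t) h2).mul_left (-Real.log t)
  have he : (fun k : ℕ => -Real.log t * (t^2)^k) = fun k : ℕ => -Real.log t * t^(2*k) := by
    funext k; rw [← pow_mul]
  rw [he] at hg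
  rw [show Real.log t / (t^2 - 1) = -Real.log t * (1 - t^2)⁻¹ from ?_]
  · exact hg
  have hne : t^2 - 1 ≠ 0 := by nlinarith
  have hne' : 1 - t^2 ≠ 0 := by nlinarith
  field_simp
  ring

private lemma hasSumB' {t : ℝ} (ht : 1 < t) :
    HasSum (fun k : ℕ => Real.log t * (t⁻¹)^(2*k+2)) (Real.log t / (t^2 - 1)) := by
  have ht0 : 0 < t := lt_trans one_pos ht
  have h1 : 1 < t^2 := by nlinarith
  have h2 : (t^2)⁻¹ < 1 := by
    rw [inv_lt_one_iff₀]; right; exact h1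
  have hg := (hasSum_geometric_of_lt_one (by positivity) h2).mul_left (Real.log t * (t⁻¹)^2)
  have he : (fun k : ℕ => Real.log t * (t⁻¹)^2 * ((t^2)⁻¹)^k)
      = fun k : ℕ => Real.log t * (t⁻¹)^(2*k+2) := by
    funext k; rw [← inv_pow, ← pow_mul]; ring
  rw [he] at hg
  rw [show Real.log t / (t^2 - 1) = Real.log t * (t⁻¹)^2 * (1 - (t^2)⁻¹)⁻¹ from ?_]
  · exact hg
  have hne : t^2 - 1 ≠ 0 := by nlinarith
  have hne2 : (1:ℝ) - (t^2)⁻¹ ≠ 0 := sub_ne_zero.mpr (ne_of_gt h2)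
  have h0 : t ≠ 0 := ht0.ne'
  field_simp

private lemma lintA : ∫⁻ t in Ioo (0:ℝ) 1, ENNReal.ofReal (Real.log t / (t^2-1))
    = ENNReal.ofReal (π^2/8) := by
  have h1 : ∫⁻ t in Ioo (0:ℝ) 1, ENNReal.ofReal (Real.log t / (t^2-1))
      = ∫⁻ t in Ioo (0:ℝ) 1, ∑' k : ℕ, ENNReal.ofReal (-Real.log t * t^(2*k)) := by
    apply setLIntegral_congr_fun measurableSet_Ioo
    intro t ht
    dsimp only
    rw [← (hasSumA' ht).tsum_eq]
    exact ENNReal.ofReal_tsum_of_nonneg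
      (fun k => mul_nonneg (neg_nonneg.2 (Real.log_nonpos ht.1.le ht.2.le))
        (pow_nonneg ht.1.le _)) (hasSumA' ht).summable
  rw [h1, lintegral_tsum (f := fun k t => ENNReal.ofReal (-Real.log t * t^(2*k))) (fun k =>
    ((Real.measurable_log.neg.mul (measurable_id'.pow_const _)).ennreal_ofReal).aemeasurable)]
  have h2 : ∀ k : ℕ, ∫⁻ t in Ioo (0:ℝ) 1, ENNReal.ofReal (-Real.log t * t^(2*k))
      = ENNReal.ofReal (1/(2*(k:ℝ)+1)^2) := by
    intro k
    rw [← ofReal_integral_eq_lintegral_ofReal (intA (2*k)).1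
      ((ae_restrict_iff' measurableSet_Ioo).mpr (ae_of_all _ fun t ht =>
        mul_nonneg (neg_nonneg.2 (Real.log_nonpos ht.1.le ht.2.le)) (pow_nonneg ht.1.le _))),
      (intA (2*k)).2]
    congr 1
    push_cast
    ring
  simp_rw [h2]
  rw [← ENNReal.ofReal_tsum_of_nonneg (fun k => by positivity) summable_odd_sq, odd_basel]

private lemma lintB : ∫⁻ t in Ioi (1:ℝ), ENNReal.ofReal (Real.log t / (t^2-1))
    = ENNReal.ofReal (π^2/8) := by
  have h1 : ∫⁻ t in Ioi (1:ℝ), ENNReal.ofReal (Real.log t / (t^2-1))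
      = ∫⁻ t in Ioi (1:ℝ), ∑' k : ℕ, ENNReal.ofReal (Real.log t * (t⁻¹)^(2*k+2)) := by
    apply setLIntegral_congr_fun measurableSet_Ioi
    intro t ht
    dsimp only
    rw [← (hasSumB' ht).tsum_eq]
    exact ENNReal.ofReal_tsum_of_nonneg
      (fun k => mul_nonneg (Real.log_nonneg ht.out.le)
        (pow_nonneg (inv_nonneg.2 (by linarith [ht.out])) _)) (hasSumB' ht).summable
  rw [h1, lintegral_tsum (f := fun k t => ENNReal.ofReal (Real.log t * (t⁻¹)^(2*k+2))) (fun k =>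
    ((Real.measurable_log.mul (measurable_inv.pow_const _)).ennreal_ofReal).aemeasurable)]
  have h2 : ∀ k : ℕ, ∫⁻ t in Ioi (1:ℝ), ENNReal.ofReal (Real.log t * (t⁻¹)^(2*k+2))
      = ENNReal.ofReal (1/(2*(k:ℝ)+1)^2) := by
    intro k
    rw [← ofReal_integral_eq_lintegral_ofReal (intB k).1
      ((ae_restrict_iff' measurableSet_Ioi).mpr (ae_of_all _ fun t ht =>
        mul_nonneg (Real.log_nonneg ht.out.le)
          (pow_nonneg (inv_nonneg.2 (by linarith [ht.out])) _))),
      (intB k).2]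
  simp_rw [h2]
  rw [← ENNReal.ofReal_tsum_of_nonneg (fun k => by positivity) summable_odd_sq, odd_basel]

private lemma lint_Ioi : ∫⁻ t in Ioi (0:ℝ), ENNReal.ofReal (Real.log t / (t^2-1))
    = ENNReal.ofReal (π^2/4) := by
  have hsplit : Ioi (0:ℝ) = Ioo 0 1 ∪ Ici 1 := (Ioo_union_Ici_eq_Ioi one_pos).symm
  have hdisj : Disjoint (Ioo (0:ℝ) 1) (Ici 1) :=
    Set.disjoint_left.mpr fun x hx hx' => (hx.2.not_ge hx')
  rw [hsplit, lintegral_union measurableSet_Ici hdisj]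
  have hIci : ∫⁻ t in Ici (1:ℝ), ENNReal.ofReal (Real.log t / (t^2-1))
      = ∫⁻ t in Ioi (1:ℝ), ENNReal.ofReal (Real.log t / (t^2-1)) :=
    setLIntegral_congr Ioi_ae_eq_Ici.symm
  rw [hIci, lintA, lintB, ← ENNReal.ofReal_add (by positivity) (by positivity)]
  congr 1
  ring

/-- The function `z ↦ 2 ln|z| / (π² (z² − 1))` is nonnegative away from `{0, 1, -1}`
and integrates to `1` over the real line. -/
theorem cauchy_product_density_is_pdf :
    (∀ z : ℝ, z ≠ 0 → z ≠ 1 → z ≠ -1 →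
      0 ≤ 2 * Real.log |z| / (Real.pi ^ 2 * (z ^ 2 - 1))) ∧
    ∫ z : ℝ, 2 * Real.log |z| / (Real.pi ^ 2 * (z ^ 2 - 1)) = 1 := by
  have pi2 : (0:ℝ) < π^2 := by positivity
  have nonneg : ∀ z : ℝ, 0 ≤ 2 * Real.log |z| / (π^2 * (z^2-1)) := by
    intro z
    rcases le_or_gt (z^2) 1 with h | h
    · have hz : |z| ≤ 1 := by nlinarith [sq_abs z, abs_nonneg z]
      have hlog : Real.log |z| ≤ 0 := Real.log_nonpos (abs_nonneg z) hz
      exact div_nonneg_iff.mpr (Or.inr ⟨by linarith, by nlinarith⟩)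
    · have hz : 1 ≤ |z| := by nlinarith [sq_abs z, abs_nonneg z]
      have hlog : 0 ≤ Real.log |z| := Real.log_nonneg hz
      exact div_nonneg (by linarith) (by nlinarith)
  refine ⟨fun z _ _ _ => nonneg z, ?_⟩
  have habs : (fun z : ℝ => 2 * Real.log |z| / (π^2 * (z^2-1)))
      = fun z : ℝ => 2/π^2 * (Real.log |z| / (|z|^2-1)) := by
    funext z
    rw [sq_abs, div_mul_div_comm]
  rw [habs,
    integral_comp_abs (f := fun t : ℝ => 2/π^2 * (Real.log t / (t^2-1))),
    MeasureTheory.integral_const_mul]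
  have hnn : 0 ≤ᵐ[volume.restrict (Ioi (0:ℝ))] fun t : ℝ => Real.log t / (t^2-1) := by
    refine (ae_restrict_iff' measurableSet_Ioi).mpr (ae_of_all _ fun t ht => ?_)
    rcases le_or_gt t 1 with h | h
    · exact div_nonneg_iff.mpr (Or.inr ⟨Real.log_nonpos ht.out.le h, by nlinarith [ht.out]⟩)
    · exact div_nonneg (Real.log_nonneg h.le) (by nlinarith)
  have hmeas : AEStronglyMeasurable (fun t : ℝ => Real.log t / (t^2-1))
      (volume.restrict (Ioi 0)) :=
    (Real.measurable_log.div ((measurable_id.pow_const 2).sub measurable_const)).aestronglyMeasurable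
  rw [integral_eq_lintegral_of_nonneg_ae hnn hmeas, lint_Ioi,
    ENNReal.toReal_ofReal (by positivity)]
  field_simp
  ring
end

section
/- The function f(z) = (4 ln²|z| + π²) / (2π³ (z² + 1)) is a probability density function on ℝ, i.e., f ≥ 0 and ∫_{-∞}^{∞} (4 ln²|z| + π²)/(2π³(z²+1)) dz = 1. -/
open MeasureTheory Real Set Filter
open scoped ENNReal Topology

lemma hasSum_aux : HasSum (fun k : ℕ => (-1:ℝ)^k * (2 / (2*(k:ℝ)+1)^3)) (π^3/16) := by
  have h := hasSum_L_function_mod_four_eval_three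
  have he : Function.Injective (fun k : ℕ => 2*k+1) := fun a b hab => by
    simp only at hab; omega
  have h2 : HasSum ((fun n : ℕ => (1 : ℝ) / (n : ℝ) ^ 3 * Real.sin (π * n / 2)) ∘
      (fun k : ℕ => 2*k+1)) (π ^ 3 / 32) := by
    rw [Function.Injective.hasSum_iff he]
    · exact h
    · intro n hn
      have : Even n := by
        rcases Nat.even_or_odd n with h | h
        · exact h
        · obtain ⟨m, hm⟩ := h
          exact absurd ⟨m, by simp only; omega⟩ hn
      obtain ⟨m, rfl⟩ := this
      have : π * ((m:ℝ) + m) / 2 = m * π := by ring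
      simp only [Nat.cast_add, this, Real.sin_nat_mul_pi, mul_zero]
  have h3 : HasSum (fun k : ℕ => (-1:ℝ)^k * (2 / (2*(k:ℝ)+1)^3)) (2 * (π^3/32)) := by
    refine (h2.mul_left 2).congr_fun fun k => ?_
    simp only [Function.comp_apply]
    push_cast
    rw [show π * (2*(k:ℝ)+1) / 2 = π/2 + k * π by ring, Real.sin_add_nat_mul_pi,
      Real.sin_pi_div_two]
    ring
  convert h3 using 1
  ring

-- generic bound: if x ≥ 1 and x^2 ≤ d then log²x/d ≤ 16 x^(-3/2)
lemma bound_aux {x d : ℝ} (hx : 1 ≤ x) (hd : x^2 ≤ d) :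
    (Real.log x)^2 / d ≤ 16 * x ^ (-(3:ℝ)/2) := by
  have hx0 : (0:ℝ) < x := lt_of_lt_of_le one_pos hx
  have hlog : Real.log x ≤ 4 * x ^ ((1:ℝ)/4) := by
    have h1 : Real.log (x ^ ((1:ℝ)/4)) ≤ x ^ ((1:ℝ)/4) := by
      linarith [Real.log_le_sub_one_of_pos (Real.rpow_pos_of_pos hx0 ((1:ℝ)/4))]
    rw [Real.log_rpow hx0] at h1
    linarith
  have hlog0 : 0 ≤ Real.log x := Real.log_nonneg hx
  have hsq : (Real.log x)^2 ≤ 16 * x ^ ((1:ℝ)/2) := by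
    have := mul_le_mul hlog hlog hlog0 (by positivity)
    calc (Real.log x)^2 = Real.log x * Real.log x := sq x.log
    _ ≤ (4 * x ^ ((1:ℝ)/4)) * (4 * x ^ ((1:ℝ)/4)) := this
    _ = 16 * (x ^ ((1:ℝ)/4) * x ^ ((1:ℝ)/4)) := by ring
    _ = 16 * x ^ ((1:ℝ)/2) := by rw [← Real.rpow_add hx0]; norm_num
  have hd0 : (0:ℝ) < d := lt_of_lt_of_le (by positivity) hd
  rw [div_le_iff₀ hd0]
  calc (Real.log x)^2 ≤ 16 * x ^ ((1:ℝ)/2) := hsq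
  _ = 16 * x ^ (-(3:ℝ)/2) * x^2 := by
      rw [mul_assoc, ← Real.rpow_two, ← Real.rpow_add hx0]; norm_num
  _ ≤ 16 * x ^ (-(3:ℝ)/2) * d := by
      have : (0:ℝ) ≤ 16 * x ^ (-(3:ℝ)/2) := by positivity
      exact mul_le_mul_of_nonneg_left hd this

lemma integrable_aux {d : ℝ → ℝ} (hd : ∀ x ∈ Ioi (1:ℝ), x^2 ≤ d x)
    (hm : Measurable d) : IntegrableOn (fun x => (Real.log x)^2 / d x) (Ioi (1:ℝ)) := by
  have hint : IntegrableOn (fun x : ℝ => 16 * x ^ (-(3:ℝ)/2)) (Ioi (1:ℝ)) :=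
    (integrableOn_Ioi_rpow_of_lt (by norm_num) one_pos).const_mul 16
  refine hint.mono' ?_ ?_
  · exact ((Real.measurable_log.pow_const 2).div hm).aestronglyMeasurable
  · filter_upwards [ae_restrict_mem measurableSet_Ioi] with x hx
    have hx1 : (1:ℝ) ≤ x := le_of_lt hx
    have hd0 : (0:ℝ) < d x := lt_of_lt_of_le (by positivity) (hd x hx)
    rw [Real.norm_eq_abs, abs_of_nonneg (by positivity)]
    exact bound_aux hx1 (hd x hx)

lemma integrable_aux' (n : ℕ) :
    IntegrableOn (fun x => (Real.log x)^2 / x^(2*n+2)) (Ioi (1:ℝ)) := by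
  refine integrable_aux (fun x hx => ?_) (measurable_id.pow_const (2*n+2))
  have hx1 : (1:ℝ) ≤ x := le_of_lt hx
  exact pow_le_pow_right₀ hx1 (by omega)

lemma int_Ioi : IntegrableOn (fun x => (Real.log x)^2 / (x^2+1)) (Ioi (1:ℝ)) := by
  refine integrable_aux (fun x hx => by nlinarith [sq_nonneg x]) ?_
  exact (measurable_id.pow_const 2).add_const 1

lemma term_integral (n : ℕ) :
    ∫ x in Ioi (1:ℝ), (Real.log x)^2 / x^(2*n+2) = 2 / (2*(n:ℝ)+1)^3 := by
  set c : ℝ := 2*(n:ℝ)+1 with hc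
  have hc0 : c ≠ 0 := by positivity
  set f : ℝ → ℝ := fun x => -(c^2*(Real.log x)^2 + (2*c*(Real.log x) + 2)) / (c^3 * x^(2*n+1))
    with hf
  have hderiv : ∀ x ∈ Ici (1:ℝ), HasDerivAt f ((Real.log x)^2 / x^(2*n+2)) x := by
    intro x hx
    have hx0 : (0:ℝ) < x := lt_of_lt_of_le one_pos hx
    have hlog := Real.hasDerivAt_log hx0.ne'
    have hu := (((hlog.pow 2).const_mul (c^2)).add ((hlog.const_mul (2*c)).add_const 2)).neg
    have hv : HasDerivAt (fun x : ℝ => c^3 * x^(2*n+1))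
        (c^3 * ((2*n+1 : ℕ) * x^(2*n+1-1))) x := (hasDerivAt_pow (2*n+1) x).const_mul (c^3)
    have hvne : c^3 * x^(2*n+1) ≠ 0 := by positivity
    have := hu.div hv hvne
    convert this using 1
    · rfl
    · rfl
    · rfl
    rw [Nat.add_sub_cancel]
    have hxne : x ≠ 0 := hx0.ne'
    simp only [Pi.neg_apply, Pi.add_apply, Pi.pow_apply, Nat.cast_add, Nat.cast_mul, Nat.cast_one,
      Nat.cast_ofNat, ← hc]
    field_simp
    ring
  have htend : Tendsto f atTop (𝓝 0) := by
    have hb : Tendsto (fun x : ℝ => (c^2*(Real.log x)^2 + 2*c*(Real.log x) + 2) / (c^3 * x))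
        atTop (𝓝 0) := by
      have t2 := (tendsto_pow_log_div_mul_add_atTop 1 0 2 one_ne_zero).const_mul (1/c)
      have t1 := (tendsto_pow_log_div_mul_add_atTop 1 0 1 one_ne_zero).const_mul (2/c^2)
      have t0 := tendsto_inv_atTop_zero.const_mul (2/c^3) (f := fun x : ℝ => x⁻¹)
      have := (t2.add t1).add t0
      simp only [mul_zero, add_zero] at this
      refine this.congr' ?_
      filter_upwards [eventually_gt_atTop (0:ℝ)] with x hx
      have hxne : x ≠ 0 := hx.ne'
      field_simp
    have hfle : ∀ᶠ x in atTop, f x ≤ (c^2*(Real.log x)^2 + 2*c*(Real.log x) + 2) / (c^3 * x) := by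
      filter_upwards [eventually_ge_atTop (1:ℝ)] with x hx
      have hl0 : 0 ≤ Real.log x := Real.log_nonneg hx
      have : f x ≤ 0 := by
        show -(c^2*(Real.log x)^2 + (2*c*(Real.log x) + 2)) / (c^3 * x^(2*n+1)) ≤ 0
        apply div_nonpos_of_nonpos_of_nonneg
        · nlinarith
        · positivity
      have h2 : 0 ≤ (c^2*(Real.log x)^2 + 2*c*(Real.log x) + 2) / (c^3 * x) := by
        have hx0 : (0:ℝ) < x := lt_of_lt_of_le one_pos hx
        apply div_nonneg (by nlinarith) (by positivity)
      linarith
    have hfge : ∀ᶠ x in atTop,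
        -((c^2*(Real.log x)^2 + 2*c*(Real.log x) + 2) / (c^3 * x)) ≤ f x := by
      filter_upwards [eventually_ge_atTop (1:ℝ)] with x hx
      have hx0 : (0:ℝ) < x := lt_of_lt_of_le one_pos hx
      have hl0 : 0 ≤ Real.log x := Real.log_nonneg hx
      have hnum : 0 ≤ c^2*(Real.log x)^2 + 2*c*(Real.log x) + 2 := by nlinarith
      show _ ≤ -(c^2*(Real.log x)^2 + (2*c*(Real.log x) + 2)) / (c^3 * x^(2*n+1))
      rw [neg_div, neg_le_neg_iff, show c^2*(Real.log x)^2 + (2*c*(Real.log x) + 2)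
        = c^2*(Real.log x)^2 + 2*c*(Real.log x) + 2 from by ring]
      apply div_le_div_of_nonneg_left hnum (by positivity)
      have h1 : x ≤ x^(2*n+1) := le_self_pow₀ hx (by omega)
      have hc3 : (0:ℝ) < c^3 := by positivity
      exact mul_le_mul_of_nonneg_left h1 hc3.le
    have := tendsto_of_tendsto_of_tendsto_of_le_of_le' (by simpa using hb.neg) hb hfge hfle
    simpa using this
  have := integral_Ioi_of_hasDerivAt_of_tendsto' hderiv (integrable_aux' n) htend
  rw [this, hf]
  norm_num
  ring

lemma key_Ioi : ∫ x in Ioi (1:ℝ), (Real.log x)^2 / (x^2+1) = π^3/16 := by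
  set F : ℕ → ℝ → ℝ := fun n x => (-1:ℝ)^n * ((Real.log x)^2 / x^(2*n+2)) with hF
  have hF_int : ∀ n, Integrable (F n) (volume.restrict (Ioi 1)) := fun n =>
    (integrable_aux' n).const_mul _
  have hnormint : ∀ n, ∫ x in Ioi (1:ℝ), ‖F n x‖ = 2/(2*(n:ℝ)+1)^3 := by
    intro n
    rw [← term_integral n]
    refine setIntegral_congr_fun measurableSet_Ioi fun x hx => ?_
    have hx0 : (0:ℝ) < x := lt_trans one_pos hx
    have hnn : (0:ℝ) ≤ (Real.log x)^2 / x^(2*n+2) := by positivity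
    simp only [hF, norm_mul, norm_pow, norm_neg, norm_one, one_pow, one_mul,
      Real.norm_eq_abs, abs_of_nonneg hnn]
  have hF_sum : Summable fun n => ∫ x in Ioi (1:ℝ), ‖F n x‖ := by
    refine Summable.congr hasSum_aux.summable.abs fun n => ?_
    rw [hnormint n, abs_mul, abs_pow, abs_neg, abs_one, one_pow, one_mul,
      abs_of_nonneg (by positivity)]
  have hs := MeasureTheory.hasSum_integral_of_summable_integral_norm hF_int hF_sum
  have heval : (fun n => ∫ x in Ioi (1:ℝ), F n x) =
      fun n : ℕ => (-1:ℝ)^n * (2/(2*(n:ℝ)+1)^3) := by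
    funext n
    simp only [hF]
    rw [integral_const_mul, term_integral n]
  rw [heval] at hs
  have htsum : ∀ x ∈ Ioi (1:ℝ), ∑' n, F n x = (Real.log x)^2/(x^2+1) := by
    intro x hx
    have hx1 : (1:ℝ) < x := hx
    have hx0 : (0:ℝ) < x := lt_trans one_pos hx1
    have hxne : x ≠ 0 := hx0.ne'
    have hr : ‖-(x^2)⁻¹‖ < 1 := by
      rw [norm_neg, norm_inv, Real.norm_eq_abs, abs_of_pos (by positivity)]
      rw [inv_lt_one_iff₀]
      right; nlinarith
    have hgeo := tsum_geometric_of_norm_lt_one hr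
    calc ∑' n, F n x = ∑' n, ((Real.log x)^2/x^2) * (-(x^2)⁻¹)^n := by
          congr 1; funext n
          simp only [hF]
          rw [show (-(x^2)⁻¹ : ℝ) = (-1) * (x^2)⁻¹ by ring, mul_pow, inv_pow, ← pow_mul]
          field_simp
          ring
    _ = ((Real.log x)^2/x^2) * (1 - (-(x^2)⁻¹))⁻¹ := by rw [tsum_mul_left, hgeo]
    _ = (Real.log x)^2/(x^2+1) := by
          rw [sub_neg_eq_add]
          field_simp
  calc ∫ x in Ioi (1:ℝ), (Real.log x)^2 / (x^2+1)
      = ∫ x in Ioi (1:ℝ), ∑' n, F n x :=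
        (setIntegral_congr_fun measurableSet_Ioi htsum).symm
  _ = π^3/16 := (hasSum_aux.unique hs).symm

lemma himg : (fun x : ℝ => x⁻¹) '' Ioi 1 = Ioo 0 1 := by
  ext y
  simp only [mem_image, mem_Ioi, mem_Ioo]
  constructor
  · rintro ⟨x, hx, rfl⟩
    have hx0 : (0:ℝ) < x := lt_trans one_pos hx
    exact ⟨by positivity, inv_lt_one_of_one_lt₀ hx⟩
  · rintro ⟨hy0, hy1⟩
    exact ⟨y⁻¹, (one_lt_inv_iff₀.mpr ⟨hy0, hy1⟩ : 1 < y⁻¹), inv_inv y⟩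

lemma hderiv_inv : ∀ x ∈ Ioi (1:ℝ), HasDerivWithinAt (fun y : ℝ => y⁻¹) (-(x^2)⁻¹) (Ioi 1) x :=
  fun _ hx => (hasDerivAt_inv (zero_lt_one.trans hx).ne').hasDerivWithinAt

lemma hcongr_inv : ∀ x ∈ Ioi (1:ℝ),
    |(-(x^2)⁻¹)| • ((Real.log x⁻¹)^2 / ((x⁻¹)^2+1)) = (Real.log x)^2 / (x^2+1) := by
  intro x hx
  have hx0 : (0:ℝ) < x := lt_trans one_pos hx
  have hxne : x ≠ 0 := hx0.ne'
  rw [abs_neg, abs_of_pos (by positivity), smul_eq_mul, Real.log_inv, neg_sq]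
  have h1 : ((x⁻¹)^2+1 : ℝ) = (1 + x^2)/x^2 := by field_simp
  have h2 : (x^2 : ℝ) ≠ 0 := pow_ne_zero _ hxne
  rw [h1, div_div_eq_mul_div, add_comm (1:ℝ), ← mul_div_assoc, mul_comm ((Real.log x)^2) (x^2),
    ← mul_assoc, inv_mul_cancel₀ h2, one_mul]

lemma key_Ioo : ∫ x in Ioo (0:ℝ) 1, (Real.log x)^2 / (x^2+1) = π^3/16 := by
  have := integral_image_eq_integral_abs_deriv_smul measurableSet_Ioi hderiv_inv
    (inv_injective.injOn) (fun y => (Real.log y)^2 / (y^2+1))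
  rw [himg] at this
  rw [this, ← key_Ioi]
  exact setIntegral_congr_fun measurableSet_Ioi hcongr_inv

lemma int_Ioo : IntegrableOn (fun x => (Real.log x)^2 / (x^2+1)) (Ioo (0:ℝ) 1) := by
  have := integrableOn_image_iff_integrableOn_abs_deriv_smul measurableSet_Ioi hderiv_inv
    (inv_injective.injOn) (fun y => (Real.log y)^2 / (y^2+1))
  rw [himg] at this
  rw [this]
  exact int_Ioi.congr_fun (fun x hx => (hcongr_inv x hx).symm) measurableSet_Ioi

lemma int_Ioi0 : IntegrableOn (fun x => (Real.log x)^2 / (x^2+1)) (Ioi (0:ℝ)) := by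
  rw [← Set.Ioo_union_Ici_eq_Ioi (zero_lt_one' ℝ)]
  exact int_Ioo.union (Iff.mpr integrableOn_Ici_iff_integrableOn_Ioi int_Ioi)

lemma key_Ioi0 : ∫ x in Ioi (0:ℝ), (Real.log x)^2 / (x^2+1) = π^3/8 := by
  rw [← Set.Ioo_union_Ici_eq_Ioi (zero_lt_one' ℝ),
    setIntegral_union (by simp [Set.disjoint_left]) measurableSet_Ici int_Ioo
      (Iff.mpr integrableOn_Ici_iff_integrableOn_Ioi int_Ioi),
    integral_Ici_eq_integral_Ioi, key_Ioo, key_Ioi]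
  ring

/-- The function `z ↦ (4 ln²|z| + π²) / (2π³ (z² + 1))` is a probability density on `ℝ`. -/
theorem cauchy_triple_product_density_is_pdf :
    (∀ z : ℝ, 0 ≤ (4 * (Real.log |z|) ^ 2 + Real.pi ^ 2) / (2 * Real.pi ^ 3 * (z ^ 2 + 1))) ∧
    ∫ z : ℝ, (4 * (Real.log |z|) ^ 2 + Real.pi ^ 2) / (2 * Real.pi ^ 3 * (z ^ 2 + 1)) = 1 := by
  constructor
  · intro z
    positivity
  · have habs : (∫ z : ℝ, (4 * (Real.log |z|) ^ 2 + Real.pi ^ 2) /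
        (2 * Real.pi ^ 3 * (z ^ 2 + 1)))
        = ∫ z : ℝ, (fun t : ℝ => (4 * (Real.log t) ^ 2 + Real.pi ^ 2) /
          (2 * Real.pi ^ 3 * (t ^ 2 + 1))) |z| := by
      congr 1
      funext z
      simp only [sq_abs]
    rw [habs, integral_comp_abs
      (f := fun t : ℝ => (4 * (Real.log t) ^ 2 + Real.pi ^ 2) / (2 * Real.pi ^ 3 * (t ^ 2 + 1)))]
    have hsplit : ∀ x ∈ Ioi (0:ℝ),
        (4 * (Real.log x) ^ 2 + Real.pi ^ 2) / (2 * Real.pi ^ 3 * (x ^ 2 + 1))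
        = (2/π^3) * ((Real.log x)^2/(x^2+1)) + (1/(2*π)) * (1+x^2)⁻¹ := by
      intro x _
      have hpi := Real.pi_ne_zero
      have h1 : (x^2+1 : ℝ) ≠ 0 := by positivity
      field_simp
      ring
    rw [setIntegral_congr_fun measurableSet_Ioi hsplit,
      integral_add (int_Ioi0.const_mul _)
        ((integrable_inv_one_add_sq.integrableOn).const_mul _),
      integral_const_mul, integral_const_mul, key_Ioi0, integral_Ioi_inv_one_add_sq,
      Real.arctan_zero]
    have hpi := Real.pi_ne_zero
    field_simp
    ring
end

section
/- For every x > 0, ∫_0^x ln(t)/(t² − 1) dt = (1/2)[π²/6 − Li₂(1−x) − Li₂(−x) − ln(x) ln(1+x)], where Li₂ is the dilogarithm. -/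
open MeasureTheory Real Set intervalIntegral

open Filter Topology

/-- The dilogarithm, `Li₂(x) = −∫_0^x ln(1−t)/t dt` (valid for `x ≤ 1`). -/
noncomputable def dilog (x : ℝ) : ℝ := -∫ t in (0 : ℝ)..x, Real.log (1 - t) / t

noncomputable def g1 (t : ℝ) : ℝ := if t = 1 then 1/2 else Real.log t / (t ^ 2 - 1)
noncomputable def g2 (t : ℝ) : ℝ := if t = 0 then -1 else Real.log (1 - t) / t

lemma g1_def {t : ℝ} (ht : t ≠ 1) : g1 t = Real.log t / (t ^ 2 - 1) := if_neg ht
lemma g2_def {t : ℝ} (ht : t ≠ 0) : g2 t = Real.log (1 - t) / t := if_neg ht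

lemma meas_g1 : Measurable g1 := by
  unfold g1
  exact Measurable.ite (measurableSet_singleton 1) measurable_const
    ((Real.measurable_log).div ((measurable_id.pow_const 2).sub measurable_const))

lemma meas_g2 : Measurable g2 := by
  unfold g2
  exact Measurable.ite (measurableSet_singleton 0) measurable_const
    ((Real.measurable_log.comp (measurable_const.sub measurable_id)).div measurable_id)

lemma ae_g1 : (fun t : ℝ => Real.log t / (t ^ 2 - 1)) =ᵐ[volume] g1 := by
  have : {t : ℝ | ¬ Real.log t / (t ^ 2 - 1) = g1 t} ⊆ {1} := by
    intro t ht
    simp only [mem_setOf_eq] at ht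
    by_contra h
    simp only [mem_singleton_iff] at h
    exact ht (g1_def h).symm
  exact (measure_mono_null this (measure_singleton 1))

lemma ae_g2 : (fun t : ℝ => Real.log (1 - t) / t) =ᵐ[volume] g2 := by
  have : {t : ℝ | ¬ Real.log (1 - t) / t = g2 t} ⊆ {0} := by
    intro t ht
    simp only [mem_setOf_eq] at ht
    by_contra h
    simp only [mem_singleton_iff] at h
    exact ht (g2_def h).symm
  exact (measure_mono_null this (measure_singleton 0))

lemma cont_g1 {x : ℝ} (hx : 0 < x) : ContinuousAt g1 x := by
  rcases eq_or_ne x 1 with rfl | hx1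
  · have hslope : Tendsto (fun t => Real.log t / (t - 1)) (𝓝[≠] (1:ℝ)) (𝓝 1) := by
      have h := (Real.hasDerivAt_log one_ne_zero)
      rw [hasDerivAt_iff_tendsto_slope] at h
      rw [inv_one] at h
      apply h.congr'
      filter_upwards with t
      rw [slope_def_field, Real.log_one, sub_zero]
    have h2 : Tendsto (fun t : ℝ => (t + 1)⁻¹) (𝓝[≠] (1:ℝ)) (𝓝 ((1+1:ℝ))⁻¹) := by
      have : ContinuousAt (fun t : ℝ => (t + 1)⁻¹) 1 :=
        ContinuousAt.inv₀ (by fun_prop) (by norm_num)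
      exact this.tendsto.mono_left nhdsWithin_le_nhds
    have key : Tendsto g1 (𝓝[≠] (1:ℝ)) (𝓝 (1/2)) := by
      have h3 := hslope.mul h2
      rw [one_mul] at h3
      have : ((1:ℝ)+1)⁻¹ = 1/2 := by norm_num
      rw [this] at h3
      apply h3.congr'
      filter_upwards [self_mem_nhdsWithin] with t (ht : t ≠ 1)
      have h1 : t - 1 ≠ 0 := sub_ne_zero.mpr ht
      rw [g1_def ht]
      rw [show t ^ 2 - 1 = (t - 1) * (t + 1) by ring, div_eq_mul_inv, div_eq_mul_inv, mul_inv]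
      ring
    have h4 : g1 1 = 1/2 := if_pos rfl
    rw [ContinuousAt, h4, ← nhdsNE_sup_pure]
    apply key.sup
    have := tendsto_pure_nhds g1 1
    rwa [h4] at this
  · have hform : ContinuousAt (fun t : ℝ => Real.log t / (t ^ 2 - 1)) x := by
      apply ContinuousAt.div (Real.continuousAt_log (ne_of_gt hx)) (by fun_prop)
      intro h
      have h2 : x ^ 2 = 1 := by linarith [sub_eq_zero.mp h]
      have : x = 1 := by nlinarith
      exact hx1 this
    apply hform.congr
    filter_upwards [isOpen_ne.mem_nhds hx1] with t (ht : t ≠ 1)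
    exact (g1_def ht).symm

lemma cont_g2 {x : ℝ} (hx : x < 1) : ContinuousAt g2 x := by
  rcases eq_or_ne x 0 with rfl | hx0
  · have hslope : Tendsto (fun t => Real.log (1 - t) / t) (𝓝[≠] (0:ℝ)) (𝓝 (-1)) := by
      have h : HasDerivAt (fun t : ℝ => Real.log (1 - t)) (-1) 0 := by
        have := (Real.hasDerivAt_log (by norm_num : (1:ℝ) - 0 ≠ 0)).comp 0
          ((hasDerivAt_id (0:ℝ)).const_sub 1)
        simp at this; exact this
      rw [hasDerivAt_iff_tendsto_slope] at h
      apply h.congr'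
      filter_upwards with t
      rw [slope_def_field]
      simp
    have key : Tendsto g2 (𝓝[≠] (0:ℝ)) (𝓝 (-1)) := by
      apply hslope.congr'
      filter_upwards [self_mem_nhdsWithin] with t (ht : t ≠ 0)
      exact (g2_def ht).symm
    have h4 : g2 0 = -1 := if_pos rfl
    rw [ContinuousAt, h4, ← nhdsNE_sup_pure]
    apply key.sup
    have := tendsto_pure_nhds g2 0
    rwa [h4] at this
  · have hlog : ContinuousAt (fun t : ℝ => Real.log (1 - t)) x := by
      have h1 : (1:ℝ) - x ≠ 0 := by intro h; linarith [sub_eq_zero.mp h]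
      exact (Real.continuousAt_log h1).comp (by fun_prop)
    have hform : ContinuousAt (fun t : ℝ => Real.log (1 - t) / t) x :=
      hlog.div continuousAt_id hx0
    apply hform.congr
    filter_upwards [isOpen_ne.mem_nhds hx0] with t (ht : t ≠ 0)
    exact (g2_def ht).symm
-- negative log is integrable on [0,1]
lemma int_neg_log : IntervalIntegrable (fun t : ℝ => -Real.log t) volume 0 1 := by
  have hcont : ContinuousOn (fun t : ℝ => t - t * Real.log t) (uIcc (0:ℝ) 1) :=
    (continuous_id.sub Real.continuous_mul_log).continuousOn
  apply intervalIntegrable_deriv_of_nonneg hcont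
  · intro t ht
    simp only [min_def, max_def] at ht
    norm_num at ht
    have h1 : HasDerivAt (fun t : ℝ => t - t * Real.log t) (1 - (Real.log t + 1)) t :=
      (hasDerivAt_id t).sub (Real.hasDerivAt_mul_log (ne_of_gt ht.1))
    convert h1 using 1
    ring
  · intro t ht
    simp only [min_def, max_def] at ht
    norm_num at ht
    have := Real.log_nonpos (le_of_lt ht.1) (le_of_lt ht.2)
    linarith

lemma int_g1_aux : IntervalIntegrable g1 volume 0 (1/2) := by
  apply IntervalIntegrable.mono_fun (F := ℝ)
    ((int_neg_log.smul (2:ℝ)).mono_set (by rw [uIcc_of_le, uIcc_of_le] <;> norm_num; exact Icc_subset_Icc le_rfl (by norm_num)))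
    (meas_g1.aestronglyMeasurable.restrict)
  rw [Filter.EventuallyLE, ae_restrict_iff' measurableSet_uIoc]
  filter_upwards with t ht
  rw [uIoc_of_le (by norm_num : (0:ℝ) ≤ 1/2)] at ht
  obtain ⟨ht0, ht1⟩ := ht
  have ht1' : t ≠ 1 := by intro h; rw [h] at ht1; norm_num at ht1
  rw [g1_def ht1']
  have hlog : Real.log t ≤ 0 := Real.log_nonpos (le_of_lt ht0) (by linarith)
  have hsq : t ^ 2 - 1 < 0 := by nlinarith
  have h2 : (1:ℝ)/2 ≤ 1 - t^2 := by nlinarith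
  simp only [Pi.smul_apply, smul_eq_mul, Real.norm_eq_abs]
  rw [abs_div, abs_of_nonpos hlog, abs_of_nonpos (le_of_lt hsq), abs_of_nonneg (by nlinarith : (0:ℝ) ≤ 2 * -Real.log t)]
  rw [div_le_iff₀ (by linarith)]
  nlinarith
lemma contOn_g1 {a b : ℝ} (ha : 0 < a) (hb : 0 < b) : ContinuousOn g1 (uIcc a b) :=
  fun t ht => (cont_g1 (lt_of_lt_of_le (lt_min ha hb) ht.1)).continuousWithinAt

lemma int_g1 {x : ℝ} (hx : 0 < x) : IntervalIntegrable g1 volume 0 x := by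
  apply int_g1_aux.trans ((contOn_g1 (by norm_num) hx).intervalIntegrable)

lemma int_g2_small {y : ℝ} (hy : y ≤ 1/2) : IntervalIntegrable g2 volume 0 y := by
  apply ContinuousOn.intervalIntegrable
  intro t ht
  have : t ≤ 1/2 := le_trans ht.2 (by rw [max_le_iff]; constructor <;> norm_num <;> linarith)
  exact (cont_g2 (by linarith)).continuousWithinAt

lemma int_g2_aux : IntervalIntegrable g2 volume (1/2) 1 := by
  have base : IntervalIntegrable (fun t : ℝ => -Real.log (1 - t)) volume (1/2) 1 := by
    have h1 : IntervalIntegrable (fun t : ℝ => -Real.log t) volume 0 (1/2) :=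
      int_neg_log.mono_set (by
        rw [uIcc_of_le (by norm_num : (0:ℝ) ≤ 1/2), uIcc_of_le (by norm_num : (0:ℝ) ≤ 1)]
        exact Icc_subset_Icc le_rfl (by norm_num))
    have h2 := (h1.comp_sub_left 1).symm
    norm_num at h2
    exact h2
  apply IntervalIntegrable.mono_fun (F := ℝ) (base.smul (2:ℝ))
    (meas_g2.aestronglyMeasurable.restrict)
  rw [Filter.EventuallyLE, ae_restrict_iff' measurableSet_uIoc]
  filter_upwards with t ht
  rw [uIoc_of_le (by norm_num : (1:ℝ)/2 ≤ 1)] at ht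
  obtain ⟨ht0, ht1⟩ := ht
  have ht0' : t ≠ 0 := by intro h; rw [h] at ht0; norm_num at ht0
  rw [g2_def ht0']
  have hlog : Real.log (1 - t) ≤ 0 := by
    rcases eq_or_lt_of_le ht1 with rfl | h
    · simp
    · exact Real.log_nonpos (by linarith) (by linarith)
  simp only [Pi.smul_apply, smul_eq_mul, Real.norm_eq_abs]
  rw [abs_div, abs_of_nonpos hlog, abs_of_pos (by linarith : (0:ℝ) < t),
    abs_of_nonneg (by linarith : (0:ℝ) ≤ 2 * -Real.log (1 - t))]
  rw [div_le_iff₀ (by linarith)]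
  nlinarith

lemma int_g2 {y : ℝ} (hy : y ≤ 1) : IntervalIntegrable g2 volume 0 y := by
  rcases le_or_gt y (1/2) with h | h
  · exact int_g2_small h
  · exact (int_g2_small le_rfl).trans (int_g2_aux.mono_set (by
      rw [uIcc_of_le (by norm_num : (1:ℝ)/2 ≤ 1), uIcc_of_le (by linarith : (1:ℝ)/2 ≤ y)]
      exact Icc_subset_Icc le_rfl hy))

noncomputable def D (y : ℝ) : ℝ := ∫ t in (0:ℝ)..y, g2 t

lemma dilog_eq (y : ℝ) : dilog y = -D y := by
  unfold dilog D
  congr 1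
  apply intervalIntegral.integral_congr_ae
  filter_upwards [ae_g2] with t ht _
  exact ht

noncomputable def F (x : ℝ) : ℝ := ∫ t in (0:ℝ)..x, g1 t
noncomputable def G (x : ℝ) : ℝ :=
  (1 / 2) * (Real.pi ^ 2 / 6 - dilog (1 - x) - dilog (-x) - Real.log x * Real.log (1 + x))

lemma hD {y : ℝ} (hy : y < 1) : HasDerivAt D (g2 y) y :=
  intervalIntegral.integral_hasDerivAt_right (int_g2 (le_of_lt hy))
    (meas_g2.stronglyMeasurable.stronglyMeasurableAtFilter) (cont_g2 hy)

lemma hF {x : ℝ} (hx : 0 < x) : HasDerivAt F (g1 x) x :=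
  intervalIntegral.integral_hasDerivAt_right (int_g1 hx)
    (meas_g1.stronglyMeasurable.stronglyMeasurableAtFilter) (cont_g1 hx)

lemma hG {x : ℝ} (hx : 0 < x) : HasDerivAt G (g1 x) x := by
  have h1 : HasDerivAt (fun x : ℝ => dilog (1 - x)) (g2 (1 - x)) x := by
    have hd : HasDerivAt (fun x : ℝ => D (1 - x)) (g2 (1 - x) * (-1)) x :=
      (hD (by linarith : 1 - x < 1)).comp x ((hasDerivAt_id x).const_sub 1)
    have := hd.neg
    simp only [dilog_eq]
    rw [show g2 (1 - x) = -(g2 (1 - x) * -1) by ring]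
    exact this
  have h2 : HasDerivAt (fun x : ℝ => dilog (-x)) (g2 (-x)) x := by
    have hd : HasDerivAt (fun x : ℝ => D (-x)) (g2 (-x) * (-1)) x :=
      (hD (by linarith : -x < 1)).comp x ((hasDerivAt_id x).neg)
    have := hd.neg
    simp only [dilog_eq]
    rw [show g2 (-x) = -(g2 (-x) * -1) by ring]
    exact this
  have h3 : HasDerivAt (fun x : ℝ => Real.log x * Real.log (1 + x))
      (x⁻¹ * Real.log (1 + x) + Real.log x * (1 + x)⁻¹) x := by
    have hl1 : HasDerivAt Real.log x⁻¹ x := Real.hasDerivAt_log (ne_of_gt hx)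
    have hl2 : HasDerivAt (fun x : ℝ => Real.log (1 + x)) (1 + x)⁻¹ x := by
      have := (Real.hasDerivAt_log (by linarith : (1:ℝ) + x ≠ 0)).comp x
        ((hasDerivAt_id x).const_add 1)
      simp at this; exact this
    exact hl1.mul hl2
  have hcomb := ((((hasDerivAt_const x (Real.pi ^ 2 / 6)).sub h1).sub h2).sub h3).const_mul
    (1/2 : ℝ)
  refine hcomb.congr_deriv (Eq.symm ?_)
  rcases eq_or_ne x 1 with rfl | hx1
  · have e0 : g2 (1 - 1) = -1 := by norm_num [g2]
    have e1 : g2 (-1) = Real.log 2 / (-1) := by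
      rw [g2_def (by norm_num)]
      norm_num
    have e2 : g1 1 = 1/2 := if_pos rfl
    have e0' : g2 0 = -1 := if_pos rfl
    rw [e2]
    norm_num [e0', e1, Real.log_one]
    ring
  · have hx1' : (1:ℝ) - x ≠ 0 := by intro h; apply hx1; linarith
    have hx1'' : (1:ℝ) + x ≠ 0 := by linarith
    have hsq : x ^ 2 - 1 ≠ 0 := by
      intro h
      have : (x - 1) * (x + 1) = 0 := by linarith [sq_nonneg x]; 
      rcases mul_eq_zero.mp this with h' | h'
      · exact hx1 (by linarith)
      · linarith
    rw [g1_def hx1, g2_def hx1', g2_def (by intro h; apply ne_of_gt hx; linarith : -x ≠ 0)]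
    have : (1:ℝ) - (1 - x) = x := by ring
    rw [this]
    have : (1:ℝ) - -x = 1 + x := by ring
    rw [this]
    field_simp [hx.ne']
    ring

lemma Hconst {a b : ℝ} (ha : 0 < a) (hab : a ≤ b) : F b - G b = F a - G a := by
  have := constant_of_has_deriv_right_zero (f := fun x => F x - G x) (a := a) (b := b)
    (fun x hx => (((hF (lt_of_lt_of_le ha hx.1)).sub (hG (lt_of_lt_of_le ha hx.1))).continuousAt).continuousWithinAt)
    (fun x hx => by
      have h := ((hF (lt_of_lt_of_le ha hx.1)).sub (hG (lt_of_lt_of_le ha hx.1)))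
      exact h.hasDerivWithinAt.congr_deriv (sub_self _))
  exact this b ⟨hab, le_rfl⟩

lemma tendF : Tendsto F (𝓝[>] (0:ℝ)) (𝓝 0) := by
  have hint : IntegrableOn g1 (uIcc (0:ℝ) 1) volume := by
    rw [uIcc_of_le (by norm_num : (0:ℝ) ≤ 1)]
    exact (intervalIntegrable_iff_integrableOn_Icc_of_le (by norm_num)).mp (int_g1 one_pos)
  have hcont := intervalIntegral.continuousOn_primitive_interval (a := (0:ℝ)) (b := 1) hint
  have h0 : ContinuousWithinAt F (uIcc (0:ℝ) 1) 0 := by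
    have : (0:ℝ) ∈ uIcc (0:ℝ) 1 := left_mem_uIcc
    exact hcont 0 this
  have hF0 : F 0 = 0 := intervalIntegral.integral_same
  rw [← nhdsWithin_Ioc_eq_nhdsGT (zero_lt_one)]
  rw [uIcc_of_le (by norm_num : (0:ℝ) ≤ 1)] at h0
  have h2 := h0.tendsto.mono_left (nhdsWithin_mono 0 Ioc_subset_Icc_self)
  rw [hF0] at h2
  exact h2

lemma contD1 : ContinuousWithinAt D (Icc (0:ℝ) 1) 1 := by
  have hint : IntegrableOn g2 (uIcc (0:ℝ) 1) volume := by
    rw [uIcc_of_le (by norm_num : (0:ℝ) ≤ 1)]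
    exact (intervalIntegrable_iff_integrableOn_Icc_of_le (by norm_num)).mp (int_g2 le_rfl)
  have hcont := intervalIntegral.continuousOn_primitive_interval (a := (0:ℝ)) (b := 1) hint
  have h1 : (1:ℝ) ∈ uIcc (0:ℝ) 1 := right_mem_uIcc
  have := hcont 1 h1
  rwa [uIcc_of_le (by norm_num : (0:ℝ) ≤ 1)] at this

lemma tendD1 : Tendsto (fun a => D (1 - a)) (𝓝[>] (0:ℝ)) (𝓝 (D 1)) := by
  apply contD1.tendsto.comp
  rw [tendsto_nhdsWithin_iff]
  constructor
  · have : Tendsto (fun a : ℝ => 1 - a) (𝓝 0) (𝓝 1) := by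
      have := (continuous_const.sub continuous_id (f := fun a : ℝ => (1:ℝ))).tendsto 0
      simp at this; exact this
    exact this.mono_left nhdsWithin_le_nhds
  · filter_upwards [Ioo_mem_nhdsGT_of_mem (by norm_num : (0:ℝ) ∈ Ico (0:ℝ) 1)] with a ha
    exact ⟨by linarith [ha.2], by linarith [ha.1]⟩

lemma tendD0 : Tendsto (fun a : ℝ => D (-a)) (𝓝[>] (0:ℝ)) (𝓝 0) := by
  have hc : ContinuousAt D 0 := (hD (by norm_num)).continuousAt
  have hD0 : D 0 = 0 := intervalIntegral.integral_same
  have hneg : Tendsto (fun a : ℝ => -a) (𝓝[>] (0:ℝ)) (𝓝 0) := by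
    have := (continuous_neg (G := ℝ)).tendsto 0
    simp only [neg_zero] at this
    exact this.mono_left nhdsWithin_le_nhds
  have := hc.tendsto.comp hneg
  rwa [hD0] at this

lemma tendlog : Tendsto (fun a : ℝ => Real.log a * Real.log (1 + a)) (𝓝[>] (0:ℝ)) (𝓝 0) := by
  have hbd : ∀ᶠ a in 𝓝[>] (0:ℝ), ‖Real.log a * Real.log (1 + a)‖ ≤ -(a * Real.log a) := by
    filter_upwards [Ioo_mem_nhdsGT_of_mem (by norm_num : (0:ℝ) ∈ Ico (0:ℝ) 1)] with a ha
    obtain ⟨ha0, ha1⟩ := ha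
    have l1 : Real.log a ≤ 0 := Real.log_nonpos (le_of_lt ha0) (by linarith)
    have l2 : 0 ≤ Real.log (1 + a) := Real.log_nonneg (by linarith)
    have l3 : Real.log (1 + a) ≤ a := by
      have := Real.log_le_sub_one_of_pos (by linarith : (0:ℝ) < 1 + a)
      linarith
    rw [Real.norm_eq_abs, abs_mul, abs_of_nonpos l1, abs_of_nonneg l2]
    nlinarith
  have hg : Tendsto (fun a : ℝ => -(a * Real.log a)) (𝓝[>] (0:ℝ)) (𝓝 0) := by
    have := (Real.continuous_mul_log.neg.tendsto 0)
    simp only [Pi.neg_apply, Real.log_zero, mul_zero, zero_mul, neg_zero] at this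
    exact this.mono_left nhdsWithin_le_nhds
  exact squeeze_zero_norm' hbd hg

lemma Ipow (n : ℕ) : ∫ t in Ioo (0:ℝ) 1, t ^ n = 1/((n:ℝ)+1) := by
  rw [← MeasureTheory.integral_Ioc_eq_integral_Ioo,
    ← intervalIntegral.integral_of_le (by norm_num : (0:ℝ) ≤ 1), integral_pow]
  norm_num

lemma hasSum_shift : HasSum (fun n : ℕ => 1/((n:ℝ)+1)^2) (Real.pi ^ 2 / 6) := by
  have h := hasSum_zeta_two
  have h2 : HasSum (fun n : ℕ => (1:ℝ)/(((n+1:ℕ)):ℝ)^2) (Real.pi ^ 2 / 6) := by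
    apply (hasSum_nat_add_iff (f := fun n : ℕ => (1:ℝ)/(n:ℝ)^2) 1).mpr
    have : Real.pi ^ 2 / 6 + ∑ i ∈ Finset.range 1, (1:ℝ) / (i:ℝ) ^ 2 = Real.pi ^ 2 / 6 := by
      norm_num
    rw [this]
    exact h
  convert h2 using 2 with n
  push_cast
  ring

lemma D1 : D 1 = -(Real.pi ^ 2 / 6) := by
  have hint : ∀ n : ℕ, Integrable (fun t : ℝ => t ^ n / ((n:ℝ)+1))
      (volume.restrict (Ioo (0:ℝ) 1)) := by
    intro n
    have : Continuous (fun t : ℝ => t ^ n / ((n:ℝ)+1)) := (continuous_pow n).div_const _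
    exact (this.integrableOn_Icc (a := 0) (b := 1)).mono_set Ioo_subset_Icc_self
  have hval : ∀ n : ℕ, ∫ t in Ioo (0:ℝ) 1, t ^ n / ((n:ℝ)+1) = 1/((n:ℝ)+1)^2 := by
    intro n
    rw [MeasureTheory.integral_div, Ipow]
    field_simp
  have hnorm : ∀ n : ℕ, ∫ t in Ioo (0:ℝ) 1, ‖t ^ n / ((n:ℝ)+1)‖ = 1/((n:ℝ)+1)^2 := by
    intro n
    rw [← hval n]
    apply setIntegral_congr_fun measurableSet_Ioo
    intro t ht
    have hnn : 0 ≤ t ^ n / ((n:ℝ)+1) := by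
      have := le_of_lt ht.1
      positivity
    simp only [Real.norm_eq_abs]
    rw [abs_of_nonneg hnn]
  have hsum : Summable fun n : ℕ => ∫ t in Ioo (0:ℝ) 1, ‖t ^ n / ((n:ℝ)+1)‖ := by
    simp only [hnorm]
    exact hasSum_shift.summable
  have key := MeasureTheory.hasSum_integral_of_summable_integral_norm hint hsum
  have hpt : ∀ t ∈ Ioo (0:ℝ) 1, (∑' n : ℕ, t ^ n / ((n:ℝ)+1)) = -g2 t := by
    intro t ht
    obtain ⟨ht0, ht1⟩ := ht
    have habs : |t| < 1 := by rw [abs_of_pos ht0]; exact ht1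
    have h := (Real.hasSum_pow_div_log_of_abs_lt_one habs).div_const t
    have heq : (fun n : ℕ => t ^ (n+1) / ((n:ℝ)+1) / t) = fun n : ℕ => t ^ n / ((n:ℝ)+1) := by
      funext n
      rw [pow_succ]
      field_simp
    rw [heq] at h
    rw [h.tsum_eq, g2_def (ne_of_gt ht0)]
    ring
  have hDint : ∫ t in Ioo (0:ℝ) 1, (∑' n : ℕ, t ^ n / ((n:ℝ)+1)) = -D 1 := by
    rw [setIntegral_congr_fun measurableSet_Ioo (fun t ht => hpt t ht), MeasureTheory.integral_neg]
    congr 1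
    unfold D
    rw [intervalIntegral.integral_of_le (by norm_num : (0:ℝ) ≤ 1),
      MeasureTheory.integral_Ioc_eq_integral_Ioo]
  rw [hDint] at key
  have key2 : HasSum (fun n : ℕ => 1/((n:ℝ)+1)^2) (-D 1) := by
    rw [show (fun n : ℕ => 1/((n:ℝ)+1)^2) = fun n : ℕ => ∫ t in Ioo (0:ℝ) 1, t ^ n / ((n:ℝ)+1)
      from funext fun n => (hval n).symm]
    exact key
  have := hasSum_shift.unique key2
  linarith

lemma dilog_one : dilog 1 = Real.pi ^ 2 / 6 := by
  rw [dilog_eq, D1]; ring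

/-- For `x > 0`, `∫_0^x ln t/(t² − 1) dt
  = (1/2)[π²/6 − Li₂(1−x) − Li₂(−x) − ln x · ln(1+x)]`. -/
theorem integral_log_div_sq_sub_one (x : ℝ) (hx : 0 < x) :
    ∫ t in (0 : ℝ)..x, Real.log t / (t ^ 2 - 1) =
      (1 / 2) * (Real.pi ^ 2 / 6 - dilog (1 - x) - dilog (-x)
        - Real.log x * Real.log (1 + x)) := by
  have hL : (∫ t in (0 : ℝ)..x, Real.log t / (t ^ 2 - 1)) = F x := by
    unfold F
    apply intervalIntegral.integral_congr_ae
    filter_upwards [ae_g1] with t ht _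
    exact ht
  have hGtend : Tendsto G (𝓝[>] (0:ℝ)) (𝓝 0) := by
    have h1 : Tendsto (fun a : ℝ => (1/2 : ℝ) * (Real.pi ^ 2 / 6 + D (1 - a) + D (-a)
        - Real.log a * Real.log (1 + a))) (𝓝[>] (0:ℝ))
        (𝓝 ((1/2 : ℝ) * (Real.pi ^ 2 / 6 + -(Real.pi ^ 2/6) + 0 - 0))) := by
      apply Tendsto.const_mul
      rw [← D1]
      exact ((((tendsto_const_nhds).add tendD1).add tendD0).sub tendlog)
    have h2 : ((1/2 : ℝ) * (Real.pi ^ 2 / 6 + -(Real.pi ^ 2/6) + 0 - 0)) = 0 := by ring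
    rw [h2] at h1
    apply h1.congr
    intro a
    unfold G
    rw [dilog_eq (1 - a), dilog_eq (-a)]
    ring
  have htend : Tendsto (fun a => F a - G a) (𝓝[>] (0:ℝ)) (𝓝 0) := by
    have := tendF.sub hGtend
    simpa using this
  have hconst : (fun _ : ℝ => F x - G x) =ᶠ[𝓝[>] (0:ℝ)] (fun a => F a - G a) := by
    filter_upwards [Ioc_mem_nhdsGT_of_mem ⟨le_rfl, hx⟩] with a ha
    exact Hconst ha.1 ha.2
  have hlim : Tendsto (fun _ : ℝ => F x - G x) (𝓝[>] (0:ℝ)) (𝓝 (F x - G x)) :=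
    tendsto_const_nhds
  have huniq : F x - G x = 0 := tendsto_nhds_unique (hlim.congr' hconst) htend
  have : F x = G x := by linarith
  rw [hL, this]
  rfl
end

section
/- Let a, A > 0 and m ∈ ℝ, and let g : (0,∞) → ℝ satisfy g(x) → 0 as x → ∞. For sufficiently small z > 0, let x(z) be a solution of A x^m e^{-a x}(1 + g(x)) = z with x(z) → ∞ as z → 0. Then x(z) = (1/a) ln(1/z) + (m/a) ln(ln(1/z)) + (1/a) ln(A/a^m) + o(1) as z → 0⁺. -/
open Real Filter Set
open scoped Topology

/-- Asymptotics of the solution `x(z)` of `A x^m e^{-ax}(1+g(x)) = z` as `z → 0⁺`: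
`x(z) = (1/a) ln(1/z) + (m/a) ln(ln(1/z)) + (1/a) ln(A/a^m) + o(1)`. -/
theorem solution_asymptotics
    (a A m : ℝ) (ha : 0 < a) (hA : 0 < A)
    (g : ℝ → ℝ) (hg : Filter.Tendsto g Filter.atTop (𝓝 0))
    (x : ℝ → ℝ)
    (hxTop : Filter.Tendsto x (𝓝[>] (0 : ℝ)) Filter.atTop)
    (hsol : ∀ᶠ z in 𝓝[>] (0 : ℝ),
      A * (x z) ^ m * Real.exp (-(a * x z)) * (1 + g (x z)) = z) :
    Filter.Tendsto
      (fun z => x z - ((1 / a) * Real.log (1 / z) + (m / a) * Real.log (Real.log (1 / z))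
        + (1 / a) * Real.log (A / a ^ m)))
      (𝓝[>] (0 : ℝ)) (𝓝 0) := by
  set l := 𝓝[>] (0:ℝ) with hl
  have hX1 : ∀ᶠ z in l, 1 < x z := hxTop.eventually (eventually_gt_atTop 1)
  have hGx : Tendsto (fun z => g (x z)) l (𝓝 0) := hg.comp hxTop
  have hGpos : ∀ᶠ z in l, (0:ℝ) < 1 + g (x z) := by
    filter_upwards [hGx.eventually (eventually_gt_nhds (by norm_num : (-1/2 : ℝ) < 0))] with z hz
    linarith
  have hzpos : ∀ᶠ z in l, (0:ℝ) < z := self_mem_nhdsWithin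
  -- `log z` of the equation
  have hlog : ∀ᶠ z in l,
      Real.log (1/z) = a * x z - m * Real.log (x z) - Real.log A - Real.log (1 + g (x z)) := by
    filter_upwards [hsol, hX1, hGpos, hzpos] with z heq hx hG hz
    have hx0 : (0:ℝ) < x z := by linarith
    have h1 : Real.log z = Real.log A + m * Real.log (x z) - a * x z
        + Real.log (1 + g (x z)) := by
      conv_lhs => rw [← heq]
      rw [Real.log_mul (by positivity) hG.ne', Real.log_mul (by positivity)
        (Real.exp_ne_zero _), Real.log_mul hA.ne' (Real.rpow_pos_of_pos hx0 m).ne',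
        Real.log_exp, Real.log_rpow hx0]
      ring
    rw [one_div, Real.log_inv, h1]; ring
  -- `log(1/z) → ∞`
  have hL : Tendsto (fun z => Real.log (1/z)) l atTop := by
    have h1 : Tendsto (fun z : ℝ => Real.log z) l atBot := Real.tendsto_log_nhdsGT_zero
    refine (tendsto_neg_atBot_atTop.comp h1).congr (fun z => ?_)
    simp [Function.comp, one_div, Real.log_inv]
  have hLpos : ∀ᶠ z in l, 0 < Real.log (1/z) := hL.eventually (eventually_gt_atTop 0)
  -- tendsto building blocks
  have t1 : Tendsto (fun z => Real.log (x z) / x z) l (𝓝 0) :=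
    (Real.isLittleO_log_id_atTop.tendsto_div_nhds_zero).comp hxTop
  have t2 : Tendsto (fun z => (x z)⁻¹) l (𝓝 0) := tendsto_inv_atTop_zero.comp hxTop
  have hG1 : Tendsto (fun z => 1 + g (x z)) l (𝓝 1) := by
    simpa using tendsto_const_nhds.add hGx
  have t3 : Tendsto (fun z => Real.log (1 + g (x z))) l (𝓝 0) := by
    have := (Real.continuousAt_log one_ne_zero).tendsto.comp hG1
    simpa [Function.comp_def] using this
  -- `log(1/z) / x z → a`
  have hratio : Tendsto (fun z => Real.log (1/z) / x z) l (𝓝 a) := by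
    have hid : ∀ᶠ z in l, a - m * (Real.log (x z) / x z) - Real.log A * (x z)⁻¹
        - Real.log (1 + g (x z)) * (x z)⁻¹ = Real.log (1/z) / x z := by
      filter_upwards [hlog, hX1] with z hz hx
      have hx0 : x z ≠ 0 := by positivity
      field_simp
      linarith [hz]
    have ht : Tendsto (fun z => a - m * (Real.log (x z) / x z) - Real.log A * (x z)⁻¹
        - Real.log (1 + g (x z)) * (x z)⁻¹) l
        (𝓝 (a - m * 0 - Real.log A * 0 - 0 * 0)) :=
      ((tendsto_const_nhds.sub (t1.const_mul m)).sub (t2.const_mul (Real.log A))).sub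
        (t3.mul t2)
    simp only [mul_zero, zero_mul, sub_zero] at ht
    exact ht.congr' hid
  -- `a * x z / log(1/z) → 1`
  have h4 : Tendsto (fun z => a * x z / Real.log (1/z)) l (𝓝 1) := by
    have := (hratio.inv₀ ha.ne').const_mul a
    rw [mul_inv_cancel₀ ha.ne'] at this
    refine this.congr (fun z => ?_)
    rw [inv_div, mul_div_assoc]
  have h5 : Tendsto (fun z => Real.log (a * x z / Real.log (1/z))) l (𝓝 0) := by
    have := (Real.continuousAt_log one_ne_zero).tendsto.comp h4
    simpa [Function.comp_def] using this
  -- final identity and conclusion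
  have hF : Tendsto (fun z => (m/a) * Real.log (a * x z / Real.log (1/z))
      + (1/a) * Real.log (1 + g (x z))) l (𝓝 ((m/a) * 0 + (1/a) * 0)) :=
    (h5.const_mul _).add (t3.const_mul _)
  simp only [mul_zero, add_zero] at hF
  refine hF.congr' ?_
  filter_upwards [hlog, hX1, hGpos, hLpos] with z hz hx hG hLz
  have hx0 : (0:ℝ) < x z := by linarith
  have hlogA : Real.log (A / a ^ m) = Real.log A - m * Real.log a := by
    rw [Real.log_div hA.ne' (Real.rpow_pos_of_pos ha m).ne', Real.log_rpow ha]
  have hlogax : Real.log (a * x z / Real.log (1/z))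
      = Real.log a + Real.log (x z) - Real.log (Real.log (1/z)) := by
    rw [Real.log_div (by positivity) hLz.ne', Real.log_mul ha.ne' hx0.ne']
  rw [hlogA, hlogax]
  field_simp
  linarith [hz]
end
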